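/- arXiv:math/0703707 — 4 statements merged into one kernel-verified Lean document; each statement's English description precedes it below -/
import Mathlib

section
/- (Lemma 2, case k = 3) Let p be an odd prime, d ≥ 2 with d ∣ p−1, f = (p−1)/d. For every 0 ≤ ν ≤ d−1: n(3,ν) + f³ = p · Σ_{i=0}^{d−1} (ν,i)(i,θ) + f·δ_{θ0}·[n(1,ν) + f]. -/
open Finset

/-- The Gauss period `η_i = Σ_{u=0}^{f-1} ζ^{ω^{du+i}}`. -/
noncomputable def gaussPeriod (p d f : ℕ) (ω : (ZMod p)ˣ) (ζ : ℂ) (i : ℕ) : ℂ :=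
  ∑ u ∈ Finset.range f, ζ ^ (((ω : ZMod p) ^ (d * u + i)).val)

/-- The cyclotomic number `(i,j)` of order `d`. -/
noncomputable def cycNum (p d f : ℕ) (ω : (ZMod p)ˣ) (i j : ℕ) : ℕ :=
  Nat.card {uv : ℕ × ℕ // uv.1 < f ∧ uv.2 < f ∧
    (1 : ZMod p) + (ω : ZMod p) ^ (d * uv.1 + i) = (ω : ZMod p) ^ (d * uv.2 + j)}

/-- The cyclotomic integer `n(k,ν) = Σ_{i=0}^{d-1} η_i^k · η_{i+ν}`. -/
noncomputable def nInt (p d f : ℕ) (ω : (ZMod p)ˣ) (ζ : ℂ) (k ν : ℕ) : ℂ :=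
  ∑ i ∈ Finset.range d, (gaussPeriod p d f ω ζ i) ^ k * gaussPeriod p d f ω ζ (i + ν)

/-- `θ = 0` if `f` is even, `θ = d/2` if `f` is odd. -/
def theta (d f : ℕ) : ℕ := if Even f then 0 else d / 2

/-- `N(k,a)`: the number of `k`-tuples of nonzero `d`-th powers summing to `a`. -/
noncomputable def waringCount (p d k : ℕ) (a : ZMod p) : ℕ :=
  Nat.card {t : Fin k → ZMod p //
    (∀ i, ∃ b : (ZMod p)ˣ, ((b : ZMod p)) ^ d = t i) ∧ ∑ i, t i = a}

/-- `s_d(p,a)`: the least `k ≥ 1` such that `a` is a sum of `k` nonzero `d`-th powers. -/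
noncomputable def sWaring (p d : ℕ) (a : ZMod p) : ℕ :=
  sInf {k | 1 ≤ k ∧ ∃ u : Fin k → (ZMod p)ˣ, a = ∑ i, ((u i : ZMod p)) ^ d}

/-- `g_d(p) = max_{a ∈ 𝔽_p^*} s_d(p,a)`. -/
noncomputable def gWaring (p d : ℕ) : ℕ :=
  sSup {s | ∃ a : (ZMod p)ˣ, s = sWaring p d (a : ZMod p)}

/-- Product of a chain of cyclotomic numbers `(a,x₁)(x₁,x₂)⋯(xₘ,b)`. -/
noncomputable def chainProd (c : ℕ → ℕ → ℕ) (a b : ℕ) : List ℕ → ℕ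
  | [] => c a b
  | x :: xs => c a x * chainProd c x b xs

/-- Sum over all chains of `m` intermediate indices `0 ≤ i < d` of the products
`(a,i₂)(i₂,i₃)⋯(i_{m+1},b)` of consecutive cyclotomic numbers. -/
noncomputable def chainSum (d : ℕ) (c : ℕ → ℕ → ℕ) (a b m : ℕ) : ℕ :=
  ∑ v : Fin m → Fin d, chainProd c a b (List.ofFn fun i => ((v i : ℕ)))


namespace GaussAux

noncomputable def E (p : ℕ) (ζ : ℂ) (x : ZMod p) : ℂ := ζ ^ x.val

lemma E_add {p : ℕ} [NeZero p] {ζ : ℂ} (h1 : ζ ^ p = 1) (x y : ZMod p) :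
    E p ζ (x + y) = E p ζ x * E p ζ y := by
  unfold E
  rw [← pow_add, ZMod.val_add]
  conv_rhs => rw [← Nat.div_add_mod (x.val + y.val) p]
  rw [pow_add, pow_mul, h1, one_pow, one_mul]

lemma E_zero (p : ℕ) [NeZero p] (ζ : ℂ) : E p ζ 0 = 1 := by
  simp [E]

lemma sum_E_zmod {p : ℕ} [NeZero p] {ζ : ℂ} (hp : 1 < p) (hζ : IsPrimitiveRoot ζ p) :
    ∑ x : ZMod p, E p ζ x = 0 := by
  have h : ∑ x : ZMod p, E p ζ x = ∑ k ∈ range p, ζ ^ k := by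
    apply Finset.sum_nbij' (fun x : ZMod p => x.val) (fun k : ℕ => (k : ZMod p))
    · intro a _; exact mem_range.mpr (ZMod.val_lt a)
    · intro a _; exact mem_univ _
    · intro a _; simp [ZMod.natCast_val, ZMod.cast_id]
    · intro a ha; exact ZMod.val_cast_of_lt (mem_range.mp ha)
    · intro a _; rfl
  rw [h, hζ.geom_sum_eq_zero hp]

lemma sum_E_mul {p : ℕ} [Fact p.Prime] {ζ : ℂ} (hζ : IsPrimitiveRoot ζ p)
    (c : ZMod p) :
    ∑ x : ZMod p, E p ζ (c * x) = if c = 0 then (p : ℂ) else 0 := by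
  by_cases hc : c = 0
  · simp [hc, E_zero, ZMod.card]
  · rw [if_neg hc]
    have hb : Function.Bijective (fun x : ZMod p => c * x) :=
      (Equiv.mulLeft₀ c hc).bijective
    rw [Fintype.sum_bijective _ hb _ (fun x => E p ζ x) (fun x => rfl)]
    exact sum_E_zmod (Fact.out : p.Prime).one_lt hζ

lemma sum_E_units {p : ℕ} [Fact p.Prime] {ζ : ℂ} (hζ : IsPrimitiveRoot ζ p)
    (c : ZMod p) :
    ∑ x : (ZMod p)ˣ, E p ζ ((x : ZMod p) * c) = (if c = 0 then (p : ℂ) else 0) - 1 := by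
  have h0 : ∑ x : ZMod p, E p ζ (c * x) = if c = 0 then (p : ℂ) else 0 := sum_E_mul hζ c
  have hunits : ∑ x : (ZMod p)ˣ, E p ζ ((x : ZMod p) * c)
      = ∑ x ∈ (univ : Finset (ZMod p)).erase 0, E p ζ (c * x) := by
    apply Finset.sum_nbij' (fun u : (ZMod p)ˣ => (u : ZMod p))
      (fun a : ZMod p => if h : a = 0 then 1 else Units.mk0 a h)
    · intro a _; exact mem_erase.mpr ⟨a.ne_zero, mem_univ _⟩
    · intro a _; exact mem_univ _
    · intro a _; simp
    · intro a ha; simp [(mem_erase.mp ha).1]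
    · intro a _; rw [mul_comm]
  have hsplit : ∑ x : ZMod p, E p ζ (c * x)
      = E p ζ (c * 0) + ∑ x ∈ (univ : Finset (ZMod p)).erase 0, E p ζ (c * x) :=
    (Finset.add_sum_erase _ _ (mem_univ 0)).symm
  rw [hunits]
  rw [hsplit, mul_zero, E_zero] at h0
  linear_combination h0
  

lemma pow_congr {p : ℕ} {ω : (ZMod p)ˣ} (horder : orderOf ω = p - 1)
    {a b : ℕ} (h : a ≡ b [MOD p - 1]) : (ω : ZMod p) ^ a = (ω : ZMod p) ^ b := by
  rw [← Units.val_pow_eq_pow_val, ← Units.val_pow_eq_pow_val]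
  congr 1
  exact pow_eq_pow_iff_modEq.mpr (by rw [horder]; exact h)

lemma pow_inj {p : ℕ} {ω : (ZMod p)ˣ} (horder : orderOf ω = p - 1)
    {a b : ℕ} (ha : a < p - 1) (hb : b < p - 1)
    (h : (ω : ZMod p) ^ a = (ω : ZMod p) ^ b) : a = b := by
  rw [← Units.val_pow_eq_pow_val, ← Units.val_pow_eq_pow_val] at h
  have h2 : a ≡ b [MOD p - 1] := by
    rw [← horder]; exact pow_eq_pow_iff_modEq.mp (Units.ext h)
  calc a = a % (p-1) := (Nat.mod_eq_of_lt ha).symm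
    _ = b % (p-1) := h2
    _ = b := Nat.mod_eq_of_lt hb

lemma sum_shift {p d f : ℕ} {ω : (ZMod p)ˣ} (horder : orderOf ω = p - 1)
    (hm : d * f = p - 1) (hf0 : 0 < f) (g : ZMod p → ℂ) (j t : ℕ) :
    ∑ u ∈ range f, g ((ω : ZMod p) ^ (d * u + j + d * t))
      = ∑ u ∈ range f, g ((ω : ZMod p) ^ (d * u + j)) := by
  apply Finset.sum_nbij' (fun u : ℕ => (u + t) % f) (fun u : ℕ => (u + (f - t % f)) % f)
  · intro a _; exact mem_range.mpr (Nat.mod_lt _ hf0)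
  · intro a _; exact mem_range.mpr (Nat.mod_lt _ hf0)
  · intro a ha
    rw [Nat.mod_add_mod]
    have h1 : a + t + (f - t % f) = a + f * (t / f) + f := by
      have := Nat.div_add_mod t f
      have := Nat.mod_lt t hf0
      omega
    rw [h1, Nat.add_mod_right, Nat.add_mul_mod_self_left,
      Nat.mod_eq_of_lt (mem_range.mp ha)]
  · intro a ha
    rw [Nat.mod_add_mod]
    have h1 : a + (f - t % f) + t = a + f * (t / f) + f := by
      have := Nat.div_add_mod t f
      have := Nat.mod_lt t hf0
      omega
    rw [h1, Nat.add_mod_right, Nat.add_mul_mod_self_left,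
      Nat.mod_eq_of_lt (mem_range.mp ha)]
  · intro a _
    congr 1
    apply pow_congr horder
    have h1 : (a + t) % f ≡ a + t [MOD f] := Nat.mod_modEq _ _
    have h2 : d * ((a+t) % f) ≡ d * (a + t) [MOD d * f] := Nat.ModEq.mul_left' _ h1
    rw [hm] at h2
    calc d * a + j + d * t = d * (a + t) + j := by ring
      _ ≡ d * ((a+t) % f) + j [MOD p - 1] := (h2.symm).add_right j

lemma sum_classes {p d f : ℕ} {ω : (ZMod p)ˣ} [Fact p.Prime]
    (horder : orderOf ω = p - 1) (hm : d * f = p - 1)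
    (hω : ∀ x : (ZMod p)ˣ, ∃ n : ℕ, ω ^ n = x) (hd0 : 0 < d)
    (g : ZMod p → ℂ) :
    ∑ i ∈ range d, ∑ u ∈ range f, g ((ω : ZMod p) ^ (d * u + i))
      = ∑ x : (ZMod p)ˣ, g x := by
  have hp1 : 0 < p - 1 := by
    have := (Fact.out : p.Prime).one_lt; omega
  rw [← Finset.sum_product']
  apply Finset.sum_bij (fun iu _ => ω ^ (d * iu.2 + iu.1))
  · intro a _; exact mem_univ _
  · rintro ⟨i, u⟩ hiu ⟨i', u'⟩ hiu' h
    simp only [mem_product, mem_range] at hiu hiu'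
    have hlt : ∀ (i u : ℕ), i < d → u < f → d * u + i < p - 1 := by
      intro i u hi hu
      calc d * u + i < d * u + d := by omega
        _ = d * (u + 1) := by ring
        _ ≤ d * f := Nat.mul_le_mul_left d hu
        _ = p - 1 := hm
    have heq : d * u + i = d * u' + i' :=
      pow_inj horder (hlt i u hiu.1 hiu.2) (hlt i' u' hiu'.1 hiu'.2)
        (by rw [← Units.val_pow_eq_pow_val, ← Units.val_pow_eq_pow_val]; exact congrArg _ h)
    have e1 : (d * u + i) % d = i := by rw [Nat.mul_add_mod, Nat.mod_eq_of_lt hiu.1]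
    have e2 : (d * u' + i') % d = i' := by rw [Nat.mul_add_mod, Nat.mod_eq_of_lt hiu'.1]
    have hi : i = i' := by rw [← e1, ← e2, heq]
    have hu : u = u' := Nat.eq_of_mul_eq_mul_left hd0 (by omega)
    simp [hi, hu]
  · intro x _
    obtain ⟨n, hn⟩ := hω x
    refine ⟨⟨n % (p-1) % d, n % (p-1) / d⟩, ?_, ?_⟩
    · simp only [mem_product, mem_range]
      constructor
      · exact Nat.mod_lt _ hd0
      · exact Nat.div_lt_of_lt_mul (by rw [hm]; exact Nat.mod_lt _ hp1)
    · rw [← hn]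
      rw [Nat.div_add_mod (n % (p-1)) d]
      exact pow_eq_pow_iff_modEq.mpr (by rw [horder]; exact Nat.mod_modEq _ _)
  · rintro ⟨i, u⟩ _
    rw [Units.val_pow_eq_pow_val]


lemma exists_rep {p d f : ℕ} {ω : (ZMod p)ˣ} [Fact p.Prime]
    (horder : orderOf ω = p - 1) (hm : d * f = p - 1)
    (hω : ∀ x : (ZMod p)ˣ, ∃ n : ℕ, ω ^ n = x) (hd0 : 0 < d)
    {c : ZMod p} (hc : c ≠ 0) :
    ∃ v j : ℕ, v < f ∧ j < d ∧ c = (ω : ZMod p) ^ (d * v + j) := by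
  have hp1 : 0 < p - 1 := by have := (Fact.out : p.Prime).one_lt; omega
  obtain ⟨u, hu⟩ := IsUnit.exists_left_inv (isUnit_iff_ne_zero.mpr hc).unit.isUnit
  obtain ⟨n, hn⟩ := hω (isUnit_iff_ne_zero.mpr hc).unit
  refine ⟨n % (p-1) / d, n % (p-1) % d, ?_, Nat.mod_lt _ hd0, ?_⟩
  · exact Nat.div_lt_of_lt_mul (by rw [hm]; exact Nat.mod_lt _ hp1)
  · have : (ω : ZMod p) ^ (d * (n % (p-1) / d) + n % (p-1) % d) = (ω : ZMod p) ^ n := by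
      rw [Nat.div_add_mod (n % (p-1)) d]
      exact pow_congr horder (Nat.mod_modEq _ _)
    rw [this, ← Units.val_pow_eq_pow_val, hn, IsUnit.unit_spec]

lemma neg_one_eq {p : ℕ} {ω : (ZMod p)ˣ} [Fact p.Prime]
    (hodd : Odd p) (horder : orderOf ω = p - 1) :
    (ω : ZMod p) ^ ((p - 1) / 2) = -1 := by
  have hp : p.Prime := Fact.out
  have hp3 : 3 ≤ p := by
    rcases hodd with ⟨k, hk⟩
    have := hp.two_le
    omega
  set t : (ZMod p)ˣ := ω ^ ((p - 1) / 2) with ht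
  have h2 : (p - 1) / 2 * 2 = p - 1 := by
    rcases hodd with ⟨k, hk⟩; omega
  have hsq : (t : ZMod p) * (t : ZMod p) = 1 := by
    have : t * t = 1 := by
      rw [ht, ← pow_add]
      have : (p-1)/2 + (p-1)/2 = p - 1 := by omega
      rw [this, ← horder, pow_orderOf_eq_one]
    simpa using congrArg (Units.val) this
  rcases mul_self_eq_one_iff.mp hsq with h | h
  · exfalso
    have : orderOf ω ∣ (p-1)/2 := orderOf_dvd_of_pow_eq_one (Units.ext h)
    rw [horder] at this
    have := Nat.le_of_dvd (by omega) this
    omega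
  · rw [← Units.val_pow_eq_pow_val]; exact h

lemma crit {p d f : ℕ} {ω : (ZMod p)ˣ} [Fact p.Prime]
    (hodd : Odd p) (horder : orderOf ω = p - 1) (hm : d * f = p - 1)
    (hd0 : 0 < d) (hf0 : 0 < f) {ν : ℕ} (hν : ν < d) {w : ℕ} (hw : w < f) :
    ((1 : ZMod p) + (ω : ZMod p) ^ (d * w + ν) = 0) ↔ (ν = theta d f ∧ w = f / 2) := by
  have hp : p.Prime := Fact.out
  have hp1 : 1 < p := hp.one_lt
  have hkey : d * (f / 2) + theta d f = (p - 1) / 2 ∧ theta d f < d := by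
    unfold theta
    by_cases hfe : Even f
    · simp only [if_pos hfe]
      rcases hfe with ⟨a, ha⟩
      refine ⟨?_, hd0⟩
      have h1 : f / 2 = a := by omega
      have h3 : p - 1 = 2 * (d * a) := by rw [← hm, ha]; ring
      rw [h1, h3]
      omega
    · simp only [if_neg hfe]
      have hfo : Odd f := Nat.odd_iff.mpr (by rcases Nat.even_or_odd f with h|h; exact absurd h hfe; exact Nat.odd_iff.mp h)
      have hde : Even d := by
        rcases Nat.even_or_odd d with h|h
        · exact h
        · exfalso
          have hpe : (p - 1) % 2 = 0 := by rcases hodd with ⟨k, hk⟩; omega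
          rw [← hm, Nat.mul_mod, Nat.odd_iff.mp h, Nat.odd_iff.mp hfo] at hpe
          omega
      rcases hde with ⟨a, ha⟩
      rcases hfo with ⟨b, hb⟩
      constructor
      · have h1 : f / 2 = b := by omega
        have h2 : d / 2 = a := by omega
        have h3 : (p - 1) = d * f := hm.symm
        rw [h1, h2]
        have : d * f = 2 * (d * b + a) := by rw [ha, hb]; ring
        omega
      · omega
  obtain ⟨hkey1, hθd⟩ := hkey
  have hhalf : (p - 1) / 2 < p - 1 := by omega
  constructor
  · intro h
    have h1 : (ω : ZMod p) ^ (d * w + ν) = (ω : ZMod p) ^ ((p - 1) / 2) := by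
      rw [neg_one_eq hodd horder]
      linear_combination h
    have h2 : d * w + ν = (p - 1) / 2 := by
      apply pow_inj horder _ hhalf h1
      calc d * w + ν < d * w + d := by omega
        _ = d * (w + 1) := by ring
        _ ≤ d * f := Nat.mul_le_mul_left d hw
        _ = p - 1 := hm
    rw [← hkey1] at h2
    have e1 : (d * w + ν) % d = ν := by rw [Nat.mul_add_mod, Nat.mod_eq_of_lt hν]
    have e2 : (d * (f/2) + theta d f) % d = theta d f := by
      rw [Nat.mul_add_mod, Nat.mod_eq_of_lt hθd]
    have hνθ : ν = theta d f := by rw [← e1, ← e2, h2]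
    refine ⟨hνθ, Nat.eq_of_mul_eq_mul_left hd0 (by omega)⟩
  · rintro ⟨hνθ, hwf⟩
    rw [hνθ, hwf, hkey1, neg_one_eq hodd horder]
    ring


lemma rep_unique {p d f : ℕ} {ω : (ZMod p)ˣ}
    (horder : orderOf ω = p - 1) (hm : d * f = p - 1) (hd0 : 0 < d)
    {v j v' j' : ℕ} (hv : v < f) (hj : j < d) (hv' : v' < f) (hj' : j' < d)
    (h : (ω : ZMod p) ^ (d * v + j) = (ω : ZMod p) ^ (d * v' + j')) :
    v = v' ∧ j = j' := by
  have hlt : ∀ (j v : ℕ), j < d → v < f → d * v + j < p - 1 := by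
    intro j v hjj hvv
    calc d * v + j < d * v + d := by omega
      _ = d * (v + 1) := by ring
      _ ≤ d * f := Nat.mul_le_mul_left d hvv
      _ = p - 1 := hm
  have heq : d * v + j = d * v' + j' :=
    pow_inj horder (hlt j v hj hv) (hlt j' v' hj' hv') h
  have e1 : (d * v + j) % d = j := by rw [Nat.mul_add_mod, Nat.mod_eq_of_lt hj]
  have e2 : (d * v' + j') % d = j' := by rw [Nat.mul_add_mod, Nat.mod_eq_of_lt hj']
  have hjj : j = j' := by rw [← e1, ← e2, heq]
  exact ⟨Nat.eq_of_mul_eq_mul_left hd0 (by omega), hjj⟩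

lemma cycNum_eq (p d f : ℕ) (ω : (ZMod p)ˣ) (a b : ℕ) :
    cycNum p d f ω a b = ∑ w ∈ range f, ∑ v ∈ range f,
      (if (1 : ZMod p) + (ω : ZMod p) ^ (d * w + a) = (ω : ZMod p) ^ (d * v + b)
        then 1 else 0) := by
  classical
  set P : ℕ × ℕ → Prop := fun uv =>
    (1 : ZMod p) + (ω : ZMod p) ^ (d * uv.1 + a) = (ω : ZMod p) ^ (d * uv.2 + b) with hP
  have h1 : cycNum p d f ω a b = ((range f ×ˢ range f).filter P).card := by
    rw [← Nat.card_eq_finsetCard]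
    apply Nat.card_congr
    apply Equiv.subtypeEquivRight
    intro uv
    simp only [mem_filter, mem_product, mem_range, hP]
    tauto
  rw [h1, Finset.card_filter, Finset.sum_product]

lemma eta_mul {p d f : ℕ} {ω : (ZMod p)ˣ} {ζ : ℂ} [Fact p.Prime]
    (hζ : IsPrimitiveRoot ζ p) (hodd : Odd p)
    (horder : orderOf ω = p - 1) (hm : d * f = p - 1)
    (hω : ∀ x : (ZMod p)ˣ, ∃ n : ℕ, ω ^ n = x)
    (hd0 : 0 < d) (hf0 : 0 < f) (i ν : ℕ) (hν : ν < d) :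
    gaussPeriod p d f ω ζ i * gaussPeriod p d f ω ζ (i + ν)
      = (∑ j ∈ range d, (cycNum p d f ω ν j : ℂ) * gaussPeriod p d f ω ζ (i + j))
        + (f : ℂ) * (if ν = theta d f then 1 else 0) := by
  classical
  haveI : NeZero p := ⟨(Fact.out : p.Prime).ne_zero⟩
  have hζp : ζ ^ p = 1 := hζ.pow_eq_one
  have hEg : ∀ k : ℕ, gaussPeriod p d f ω ζ k
      = ∑ u ∈ range f, E p ζ ((ω : ZMod p) ^ (d * u + k)) := fun k => rfl
  have h2 : ∀ u ∈ range f,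
      (∑ v ∈ range f, E p ζ ((ω : ZMod p) ^ (d * u + i)) * E p ζ ((ω : ZMod p) ^ (d * v + (i + ν))))
      = ∑ w ∈ range f, E p ζ ((ω : ZMod p) ^ (d * u + i) * (1 + (ω : ZMod p) ^ (d * w + ν))) := by
    intro u _
    rw [← sum_shift horder hm hf0
      (fun y => E p ζ ((ω : ZMod p) ^ (d * u + i)) * E p ζ y) (i + ν) u]
    apply Finset.sum_congr rfl
    intro w _
    have hexp : d * w + (i + ν) + d * u = (d * u + i) + (d * w + ν) := by ring
    have hpa : (ω : ZMod p) ^ ((d * u + i) + (d * w + ν))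
        = (ω : ZMod p) ^ (d * u + i) * (ω : ZMod p) ^ (d * w + ν) := pow_add _ _ _
    rw [hexp, ← E_add hζp, mul_one_add, hpa]
  have step1 : gaussPeriod p d f ω ζ i * gaussPeriod p d f ω ζ (i + ν)
      = ∑ w ∈ range f, ∑ u ∈ range f,
          E p ζ ((ω : ZMod p) ^ (d * u + i) * (1 + (ω : ZMod p) ^ (d * w + ν))) := by
    rw [hEg i, hEg (i + ν), Finset.sum_mul_sum]
    exact (Finset.sum_congr rfl h2).trans Finset.sum_comm
  have claim : ∀ w ∈ range f,
      (∑ u ∈ range f, E p ζ ((ω : ZMod p) ^ (d * u + i) * (1 + (ω : ZMod p) ^ (d * w + ν))))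
      = (if (1 : ZMod p) + (ω : ZMod p) ^ (d * w + ν) = 0 then (f : ℂ) else 0)
        + ∑ j ∈ range d, ∑ v ∈ range f,
            (if (1 : ZMod p) + (ω : ZMod p) ^ (d * w + ν) = (ω : ZMod p) ^ (d * v + j)
              then gaussPeriod p d f ω ζ (i + j) else 0) := by
    intro w hw
    set c : ZMod p := 1 + (ω : ZMod p) ^ (d * w + ν) with hc
    by_cases h0 : c = 0
    · rw [if_pos h0]
      have hL : ∑ u ∈ range f, E p ζ ((ω : ZMod p) ^ (d * u + i) * c) = (f : ℂ) := by
        rw [h0]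
        simp [E_zero]
      have hR : ∑ j ∈ range d, ∑ v ∈ range f,
          (if c = (ω : ZMod p) ^ (d * v + j) then gaussPeriod p d f ω ζ (i + j) else 0) = 0 := by
        apply Finset.sum_eq_zero
        intro j _
        apply Finset.sum_eq_zero
        intro v _
        rw [if_neg]
        intro hcontra
        have hne := (ω ^ (d * v + j)).ne_zero
        rw [Units.val_pow_eq_pow_val] at hne
        exact hne (h0 ▸ hcontra.symm)
      rw [hL, hR, add_zero]
    · rw [if_neg h0]
      obtain ⟨v₀, j₀, hv₀, hj₀, hrep⟩ := exists_rep horder hm hω hd0 h0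
      have hL : ∑ u ∈ range f, E p ζ ((ω : ZMod p) ^ (d * u + i) * c)
          = gaussPeriod p d f ω ζ (i + j₀) := by
        rw [hEg (i + j₀), ← sum_shift horder hm hf0 (E p ζ) (i + j₀) v₀]
        apply Finset.sum_congr rfl
        intro u _
        rw [hrep]
        congr 1
        rw [← pow_add]
        congr 1
        ring
      rw [zero_add, hL]
      symm
      refine (Finset.sum_eq_single_of_mem j₀ (mem_range.mpr hj₀) ?_).trans ?_
      · intro j hj hne
        apply Finset.sum_eq_zero
        intro v hv
        rw [if_neg]
        intro hcontra
        exact hne ((rep_unique horder hm hd0 (mem_range.mp hv) (mem_range.mp hj) hv₀ hj₀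
          (hcontra.symm.trans hrep)).2)
      · refine (Finset.sum_eq_single_of_mem v₀ (mem_range.mpr hv₀) ?_).trans (if_pos hrep)
        intro v hv hne
        rw [if_neg]
        intro hcontra
        exact hne ((rep_unique horder hm hd0 (mem_range.mp hv) hj₀ hv₀ hj₀
          (hcontra.symm.trans hrep)).1)
  have hA : ∑ w ∈ range f, (if (1 : ZMod p) + (ω : ZMod p) ^ (d * w + ν) = 0 then (f : ℂ) else 0)
      = (f : ℂ) * (if ν = theta d f then 1 else 0) := by
    have hcongr : ∀ w ∈ range f,
        (if (1 : ZMod p) + (ω : ZMod p) ^ (d * w + ν) = 0 then (f : ℂ) else 0)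
        = if (ν = theta d f ∧ w = f / 2) then (f : ℂ) else 0 := by
      intro w hw
      exact if_congr (crit hodd horder hm hd0 hf0 hν (mem_range.mp hw)) rfl rfl
    rw [Finset.sum_congr rfl hcongr]
    by_cases hνθ : ν = theta d f
    · simp only [hνθ, true_and]
      rw [Finset.sum_ite_eq' (range f) (f / 2) (fun _ => (f : ℂ)),
        if_pos (mem_range.mpr (Nat.div_lt_self hf0 one_lt_two))]
      simp
    · simp only [hνθ, false_and, if_false, Finset.sum_const_zero]
      simp
  have hB : ∑ w ∈ range f, ∑ j ∈ range d, ∑ v ∈ range f,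
        (if (1 : ZMod p) + (ω : ZMod p) ^ (d * w + ν) = (ω : ZMod p) ^ (d * v + j)
          then gaussPeriod p d f ω ζ (i + j) else 0)
      = ∑ j ∈ range d, (cycNum p d f ω ν j : ℂ) * gaussPeriod p d f ω ζ (i + j) := by
    rw [Finset.sum_comm]
    apply Finset.sum_congr rfl
    intro j _
    rw [cycNum_eq]
    push_cast
    rw [Finset.sum_mul]
    apply Finset.sum_congr rfl
    intro w _
    rw [Finset.sum_mul]
    apply Finset.sum_congr rfl
    intro v _
    rw [ite_mul, one_mul, zero_mul]
  rw [step1, Finset.sum_congr rfl claim, Finset.sum_add_distrib, hA, hB, add_comm]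


lemma cyc_row {p d f : ℕ} {ω : (ZMod p)ˣ} [Fact p.Prime]
    (hodd : Odd p) (horder : orderOf ω = p - 1) (hm : d * f = p - 1)
    (hω : ∀ x : (ZMod p)ˣ, ∃ n : ℕ, ω ^ n = x)
    (hd0 : 0 < d) (hf0 : 0 < f) {ν : ℕ} (hν : ν < d) :
    (∑ j ∈ range d, cycNum p d f ω ν j) + (if ν = theta d f then 1 else 0) = f := by
  classical
  have h1 : ∑ j ∈ range d, cycNum p d f ω ν j
      = ∑ w ∈ range f, ∑ j ∈ range d, ∑ v ∈ range f,
          (if (1 : ZMod p) + (ω : ZMod p) ^ (d * w + ν) = (ω : ZMod p) ^ (d * v + j)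
            then 1 else 0) := by
    rw [← Finset.sum_comm]
    exact Finset.sum_congr rfl fun j _ => cycNum_eq p d f ω ν j
  have h2 : ∀ w ∈ range f, (∑ j ∈ range d, ∑ v ∈ range f,
      (if (1 : ZMod p) + (ω : ZMod p) ^ (d * w + ν) = (ω : ZMod p) ^ (d * v + j)
        then 1 else 0))
      = if (1 : ZMod p) + (ω : ZMod p) ^ (d * w + ν) = 0 then 0 else 1 := by
    intro w hw
    set c : ZMod p := 1 + (ω : ZMod p) ^ (d * w + ν) with hc
    by_cases h0 : c = 0
    · rw [if_pos h0]
      apply Finset.sum_eq_zero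
      intro j _
      apply Finset.sum_eq_zero
      intro v _
      rw [if_neg]
      intro hcontra
      have hne := (ω ^ (d * v + j)).ne_zero
      rw [Units.val_pow_eq_pow_val] at hne
      exact hne (h0 ▸ hcontra.symm)
    · rw [if_neg h0]
      obtain ⟨v₀, j₀, hv₀, hj₀, hrep⟩ := exists_rep horder hm hω hd0 h0
      refine (Finset.sum_eq_single_of_mem j₀ (mem_range.mpr hj₀) ?_).trans ?_
      · intro j hj hne
        apply Finset.sum_eq_zero
        intro v hv
        rw [if_neg]
        intro hcontra
        exact hne ((rep_unique horder hm hd0 (mem_range.mp hv) (mem_range.mp hj) hv₀ hj₀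
          (hcontra.symm.trans hrep)).2)
      · refine (Finset.sum_eq_single_of_mem v₀ (mem_range.mpr hv₀) ?_).trans (if_pos hrep)
        intro v hv hne
        rw [if_neg]
        intro hcontra
        exact hne ((rep_unique horder hm hd0 (mem_range.mp hv) hj₀ hv₀ hj₀
          (hcontra.symm.trans hrep)).1)
  have h3 : ∀ w ∈ range f,
      ((if (1 : ZMod p) + (ω : ZMod p) ^ (d * w + ν) = 0 then (0:ℕ) else 1)
        + (if (ν = theta d f ∧ w = f / 2) then 1 else 0)) = 1 := by
    intro w hw
    rw [if_congr (crit hodd horder hm hd0 hf0 hν (mem_range.mp hw)) rfl rfl]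
    split <;> rfl
  have h4 : ∑ w ∈ range f, (if (ν = theta d f ∧ w = f / 2) then (1:ℕ) else 0)
      = if ν = theta d f then 1 else 0 := by
    by_cases hνθ : ν = theta d f
    · simp only [hνθ, true_and, if_pos]
      rw [Finset.sum_ite_eq' (range f) (f / 2) (fun _ => (1:ℕ)),
        if_pos (mem_range.mpr (Nat.div_lt_self hf0 one_lt_two))]
    · simp [hνθ]
  calc (∑ j ∈ range d, cycNum p d f ω ν j) + (if ν = theta d f then 1 else 0)
      = (∑ w ∈ range f, (if (1 : ZMod p) + (ω : ZMod p) ^ (d * w + ν) = 0 then 0 else 1))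
        + ∑ w ∈ range f, (if (ν = theta d f ∧ w = f / 2) then 1 else 0) := by
        rw [h1, Finset.sum_congr rfl h2, h4]
    _ = ∑ w ∈ range f, 1 := by rw [← Finset.sum_add_distrib]; exact Finset.sum_congr rfl h3
    _ = f := by simp

lemma sum_eta {p d f : ℕ} {ω : (ZMod p)ˣ} {ζ : ℂ} [Fact p.Prime]
    (hζ : IsPrimitiveRoot ζ p) (horder : orderOf ω = p - 1) (hm : d * f = p - 1)
    (hω : ∀ x : (ZMod p)ˣ, ∃ n : ℕ, ω ^ n = x) (hd0 : 0 < d) :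
    ∑ i ∈ range d, gaussPeriod p d f ω ζ i = -1 := by
  haveI : NeZero p := ⟨(Fact.out : p.Prime).ne_zero⟩
  have h1 : ∑ i ∈ range d, gaussPeriod p d f ω ζ i
      = ∑ x : (ZMod p)ˣ, E p ζ ((x : ZMod p)) :=
    sum_classes horder hm hω hd0 (E p ζ)
  have h2 := sum_E_units hζ (1 : ZMod p)
  simp only [mul_one] at h2
  rw [h1, h2, if_neg (one_ne_zero : (1 : ZMod p) ≠ 0)]
  ring

lemma eta_period {p d f : ℕ} {ω : (ZMod p)ˣ} {ζ : ℂ}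
    (horder : orderOf ω = p - 1) (hm : d * f = p - 1) (hf0 : 0 < f) (j : ℕ) :
    gaussPeriod p d f ω ζ (j + d) = gaussPeriod p d f ω ζ j := by
  have h := sum_shift (ω := ω) horder hm hf0 (E p ζ) j 1
  calc gaussPeriod p d f ω ζ (j + d)
      = ∑ u ∈ range f, E p ζ ((ω : ZMod p) ^ (d * u + j + d * 1)) := by
        apply Finset.sum_congr rfl
        intro u _
        rw [show d * u + (j + d) = d * u + j + d * 1 by ring]
        rfl
    _ = gaussPeriod p d f ω ζ j := h

lemma sum_eta_shift {p d f : ℕ} {ω : (ZMod p)ˣ} {ζ : ℂ} [Fact p.Prime]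
    (hζ : IsPrimitiveRoot ζ p) (horder : orderOf ω = p - 1) (hm : d * f = p - 1)
    (hω : ∀ x : (ZMod p)ˣ, ∃ n : ℕ, ω ^ n = x) (hd0 : 0 < d) (hf0 : 0 < f) (j : ℕ) :
    ∑ i ∈ range d, gaussPeriod p d f ω ζ (i + j) = -1 := by
  induction j with
  | zero => simpa using sum_eta hζ horder hm hω hd0
  | succ j ih =>
    have key : ∀ i : ℕ, gaussPeriod p d f ω ζ (i + (j + 1)) = (fun k => gaussPeriod p d f ω ζ (k + j)) (i + 1) := by
      intro i; simp only []; rw [show i + (j+1) = (i+1) + j by ring]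
    have h1 : ∑ i ∈ range d, gaussPeriod p d f ω ζ (i + (j + 1))
        = ∑ i ∈ range d, gaussPeriod p d f ω ζ ((i + 1) + j) :=
      Finset.sum_congr rfl fun i _ => by rw [show i + (j+1) = (i+1) + j by ring]
    have h2 := Finset.sum_range_succ' (fun k => gaussPeriod p d f ω ζ (k + j)) d
    have h3 := Finset.sum_range_succ (fun k => gaussPeriod p d f ω ζ (k + j)) d
    have h4 : gaussPeriod p d f ω ζ (d + j) = gaussPeriod p d f ω ζ (0 + j) := by
      rw [show d + j = (0 + j) + d by ring, eta_period horder hm hf0]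
    rw [h1]
    rw [h3, zero_add] at h2
    rw [zero_add] at h4
    linear_combination ih + h4 - h2

lemma n_one {p d f : ℕ} {ω : (ZMod p)ˣ} {ζ : ℂ} [Fact p.Prime]
    (hζ : IsPrimitiveRoot ζ p) (hodd : Odd p)
    (horder : orderOf ω = p - 1) (hm : d * f = p - 1)
    (hω : ∀ x : (ZMod p)ˣ, ∃ n : ℕ, ω ^ n = x)
    (hd0 : 0 < d) (hf0 : 0 < f) {ν : ℕ} (hν : ν < d) :
    nInt p d f ω ζ 1 ν = (p : ℂ) * (if ν = theta d f then 1 else 0) - (f : ℂ) := by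
  classical
  have hdf : (d : ℂ) * (f : ℂ) = (p : ℂ) - 1 := by
    have h1 : ((d * f : ℕ) : ℂ) = ((p - 1 : ℕ) : ℂ) := by rw [hm]
    have hp1 : 1 ≤ p := (Fact.out : p.Prime).one_lt.le
    push_cast [Nat.cast_sub hp1] at h1
    exact h1
  have hrow : ((∑ j ∈ range d, cycNum p d f ω ν j : ℕ) : ℂ)
      = (f : ℂ) - (if ν = theta d f then 1 else 0) := by
    have := cyc_row hodd horder hm hω hd0 hf0 hν
    have hcast : (((∑ j ∈ range d, cycNum p d f ω ν j) + (if ν = theta d f then 1 else 0) : ℕ) : ℂ) = (f : ℂ) := by rw [this]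
    push_cast at hcast
    rcases eq_or_ne ν (theta d f) with h | h <;> simp [h] at hcast ⊢ <;> linear_combination hcast
  unfold nInt
  have h1 : ∀ i ∈ range d, gaussPeriod p d f ω ζ i ^ 1 * gaussPeriod p d f ω ζ (i + ν)
      = (∑ j ∈ range d, (cycNum p d f ω ν j : ℂ) * gaussPeriod p d f ω ζ (i + j))
        + (f : ℂ) * (if ν = theta d f then 1 else 0) := by
    intro i _
    rw [pow_one]
    exact eta_mul hζ hodd horder hm hω hd0 hf0 i ν hν
  rw [Finset.sum_congr rfl h1, Finset.sum_add_distrib, Finset.sum_const, card_range,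
    Finset.sum_comm]
  have h2 : ∀ j ∈ range d, (∑ i ∈ range d, (cycNum p d f ω ν j : ℂ) * gaussPeriod p d f ω ζ (i + j))
      = -(cycNum p d f ω ν j : ℂ) := by
    intro j _
    rw [← Finset.mul_sum, sum_eta_shift hζ horder hm hω hd0 hf0 j]
    ring
  rw [Finset.sum_congr rfl h2]
  have h5 : ∑ x ∈ range d, -(cycNum p d f ω ν x : ℂ)
      = -((∑ x ∈ range d, cycNum p d f ω ν x : ℕ) : ℂ) := by
    push_cast
    simp
  rw [h5, hrow, nsmul_eq_mul]
  linear_combination (if ν = theta d f then (1:ℂ) else 0) * hdf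


lemma cyc_row_cast {p d f : ℕ} {ω : (ZMod p)ˣ} [Fact p.Prime]
    (hodd : Odd p) (horder : orderOf ω = p - 1) (hm : d * f = p - 1)
    (hω : ∀ x : (ZMod p)ˣ, ∃ n : ℕ, ω ^ n = x)
    (hd0 : 0 < d) (hf0 : 0 < f) {ν : ℕ} (hν : ν < d) :
    (∑ j ∈ range d, (cycNum p d f ω ν j : ℂ))
      = (f : ℂ) - (if ν = theta d f then 1 else 0) := by
  have h := cyc_row hodd horder hm hω hd0 hf0 hν
  have hcast : (((∑ j ∈ range d, cycNum p d f ω ν j) + (if ν = theta d f then 1 else 0) : ℕ) : ℂ)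
      = (f : ℂ) := by rw [h]
  push_cast at hcast
  rcases eq_or_ne ν (theta d f) with hh | hh <;> simp [hh] at hcast ⊢ <;> linear_combination hcast

end GaussAux

open GaussAux

/-- Lemma 2, case k = 3:
`n(3,ν) + f³ = p·Σ_{i=0}^{d-1}(ν,i)(i,θ) + f·δ_{θ0}·[n(1,ν) + f]`. -/
theorem nInt_three (p d f : ℕ) (hp : p.Prime) (hodd : Odd p)
    (hd : 2 ≤ d) (hdvd : d ∣ p - 1) (hf : f = (p - 1) / d)
    (ω : (ZMod p)ˣ) (hω : ∀ x : (ZMod p)ˣ, ∃ n : ℕ, ω ^ n = x)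
    (ζ : ℂ) (hζ : IsPrimitiveRoot ζ p)
    (ν : ℕ) (hν : ν < d) :
    nInt p d f ω ζ 3 ν + (f : ℂ) ^ 3
      = (p : ℂ) * ∑ i ∈ Finset.range d,
          (cycNum p d f ω ν i : ℂ) * (cycNum p d f ω i (theta d f) : ℂ)
        + (f : ℂ) * (if theta d f = 0 then 1 else 0) * (nInt p d f ω ζ 1 ν + (f : ℂ)) := by
  classical
  haveI : Fact p.Prime := ⟨hp⟩
  haveI : NeZero p := ⟨hp.ne_zero⟩
  have hp3 : 3 ≤ p := by rcases hodd with ⟨k, hk⟩; have := hp.two_le; omega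
  have hd0 : 0 < d := by omega
  have hm : d * f = p - 1 := by rw [hf]; exact Nat.mul_div_cancel' hdvd
  have hf0 : 0 < f := by
    rw [hf]
    exact Nat.div_pos (Nat.le_of_dvd (by omega) hdvd) hd0
  have horder : orderOf ω = p - 1 := by
    have hcard : Nat.card (ZMod p)ˣ = p - 1 := by
      rw [Nat.card_eq_fintype_card, ZMod.card_units]
    rw [← hcard]
    apply orderOf_eq_card_of_forall_mem_zpowers
    intro x
    obtain ⟨n, hn⟩ := hω x
    refine ⟨(n : ℤ), ?_⟩
    simpa using hn
  set θ := theta d f with hθ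
  have hθd : θ < d := by
    rw [hθ]; unfold theta
    split
    · omega
    · exact Nat.div_lt_self hd0 one_lt_two
  set η := gaussPeriod p d f ω ζ with hη
  set C := cycNum p d f ω with hC
  set δν : ℂ := if ν = θ then 1 else 0 with hδν
  set δ0 : ℂ := if θ = 0 then 1 else 0 with hδ0
  have hdf : (d : ℂ) * (f : ℂ) = (p : ℂ) - 1 := by
    have h1 : ((d * f : ℕ) : ℂ) = ((p - 1 : ℕ) : ℂ) := by rw [hm]
    push_cast [Nat.cast_sub hp.one_lt.le] at h1
    exact h1
  have hn1 : ∀ μ, μ < d → nInt p d f ω ζ 1 μ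
      = (p : ℂ) * (if μ = θ then 1 else 0) - (f : ℂ) :=
    fun μ hμ => n_one hζ hodd horder hm hω hd0 hf0 hμ
  have hrowC : ∀ k, k < d → (∑ j ∈ range d, (C k j : ℂ)) = (f : ℂ) - (if k = θ then 1 else 0) :=
    fun k hk => cyc_row_cast hodd horder hm hω hd0 hf0 hk
  -- n(2,k) = p (k,θ) - f²
  have hn2 : ∀ k, k < d → (∑ i ∈ range d, η i ^ 2 * η (i + k))
      = (p : ℂ) * (C k θ : ℂ) - (f : ℂ) ^ 2 := by
    intro k hk
    have hexp : ∀ i ∈ range d, η i ^ 2 * η (i + k)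
        = (∑ j ∈ range d, (C k j : ℂ) * (η i * η (i + j)))
          + η i * ((f : ℂ) * (if k = θ then 1 else 0)) := by
      intro i _
      calc η i ^ 2 * η (i + k) = η i * (η i * η (i + k)) := by ring
        _ = η i * ((∑ j ∈ range d, (C k j : ℂ) * η (i + j))
              + (f : ℂ) * (if k = θ then 1 else 0)) := by
            rw [hη, hθ, eta_mul hζ hodd horder hm hω hd0 hf0 i k hk]
        _ = _ := by rw [mul_add, Finset.mul_sum]; congr 1; exact Finset.sum_congr rfl fun j _ => by ring
    rw [Finset.sum_congr rfl hexp, Finset.sum_add_distrib]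
    have part1 : ∑ i ∈ range d, ∑ j ∈ range d, (C k j : ℂ) * (η i * η (i + j))
        = ∑ j ∈ range d, (C k j : ℂ) * ((p : ℂ) * (if j = θ then 1 else 0) - (f : ℂ)) := by
      rw [Finset.sum_comm]
      apply Finset.sum_congr rfl
      intro j hj
      rw [← Finset.mul_sum]
      congr 1
      calc ∑ i ∈ range d, η i * η (i + j) = nInt p d f ω ζ 1 j := by
            unfold nInt
            exact Finset.sum_congr rfl fun i _ => by rw [pow_one]
        _ = _ := hn1 j (mem_range.mp hj)
    have part2 : ∑ i ∈ range d, η i * ((f : ℂ) * (if k = θ then 1 else 0))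
        = -((f : ℂ) * (if k = θ then 1 else 0)) := by
      rw [← Finset.sum_mul, hη, sum_eta hζ horder hm hω hd0]
      ring
    rw [part1, part2]
    have part3 : ∑ j ∈ range d, (C k j : ℂ) * ((p : ℂ) * (if j = θ then 1 else 0) - (f : ℂ))
        = (p : ℂ) * (C k θ : ℂ) - (f : ℂ) * ((f : ℂ) - (if k = θ then 1 else 0)) := by
      have split : ∀ j ∈ range d, (C k j : ℂ) * ((p : ℂ) * (if j = θ then 1 else 0) - (f : ℂ))
          = (p : ℂ) * (if j = θ then (C k j : ℂ) else 0) - (f : ℂ) * (C k j : ℂ) := by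
        intro j _
        by_cases h : j = θ <;> simp [h] <;> ring
      rw [Finset.sum_congr rfl split, Finset.sum_sub_distrib, ← Finset.mul_sum, ← Finset.mul_sum,
        Finset.sum_ite_eq' (range d) θ (fun j => (C k j : ℂ)), if_pos (mem_range.mpr hθd),
        hrowC k hk]
    rw [part3]
    ring
  -- Σ η i ²
  have hsq : ∑ i ∈ range d, η i ^ 2 = (p : ℂ) * δ0 - (f : ℂ) := by
    have h := hn1 0 hd0
    have h2 : nInt p d f ω ζ 1 0 = ∑ i ∈ range d, η i ^ 2 := by
      unfold nInt
      exact Finset.sum_congr rfl fun i _ => by rw [pow_one, Nat.add_zero]; ring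
    rw [← h2, h, hδ0]
    congr 2
    simp [eq_comm]
  -- n(3,ν)
  have hexp3 : ∀ i ∈ range d, η i ^ 3 * η (i + ν)
      = (∑ j ∈ range d, (C ν j : ℂ) * (η i ^ 2 * η (i + j))) + η i ^ 2 * ((f : ℂ) * δν) := by
    intro i _
    calc η i ^ 3 * η (i + ν) = η i ^ 2 * (η i * η (i + ν)) := by ring
      _ = η i ^ 2 * ((∑ j ∈ range d, (C ν j : ℂ) * η (i + j)) + (f : ℂ) * δν) := by
          rw [hη, hδν, hθ, eta_mul hζ hodd horder hm hω hd0 hf0 i ν hν]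
      _ = _ := by rw [mul_add, Finset.mul_sum]; congr 1; exact Finset.sum_congr rfl fun j _ => by ring
  have hn3 : nInt p d f ω ζ 3 ν
      = (∑ j ∈ range d, (C ν j : ℂ) * ((p : ℂ) * (C j θ : ℂ) - (f : ℂ) ^ 2))
        + ((p : ℂ) * δ0 - (f : ℂ)) * ((f : ℂ) * δν) := by
    unfold nInt
    rw [Finset.sum_congr rfl hexp3, Finset.sum_add_distrib, ← Finset.sum_mul, hsq]
    congr 1
    rw [Finset.sum_comm]
    apply Finset.sum_congr rfl
    intro j hj
    rw [← Finset.mul_sum, hn2 j (mem_range.mp hj)]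
  have hsplit3 : ∑ j ∈ range d, (C ν j : ℂ) * ((p : ℂ) * (C j θ : ℂ) - (f : ℂ) ^ 2)
      = (p : ℂ) * (∑ j ∈ range d, (C ν j : ℂ) * (C j θ : ℂ))
        - (f : ℂ) ^ 2 * ((f : ℂ) - δν) := by
    have split : ∀ j ∈ range d, (C ν j : ℂ) * ((p : ℂ) * (C j θ : ℂ) - (f : ℂ) ^ 2)
        = (p : ℂ) * ((C ν j : ℂ) * (C j θ : ℂ)) - (f : ℂ) ^ 2 * (C ν j : ℂ) := by
      intro j _; ring
    rw [Finset.sum_congr rfl split, Finset.sum_sub_distrib, ← Finset.mul_sum, ← Finset.mul_sum,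
      hrowC ν hν, hδν]
  have hn1ν : nInt p d f ω ζ 1 ν = (p : ℂ) * δν - (f : ℂ) := by
    rw [hn1 ν hν, hδν]
  rw [hn3, hsplit3, hn1ν]
  ring
end

section
/- (Lemma 2, case k = 4) Let p be an odd prime, d ≥ 2 with d ∣ p−1, f = (p−1)/d. For every 0 ≤ ν ≤ d−1: n(4,ν) + f⁴ = p · Σ_{i,j=0}^{d−1} (ν,i)(i,j)(j,θ) + f·δ_{θ0}·[n(2,ν) + f²] + f·(0,θ)·[n(1,ν) + f]. -/
open Finset

namespace NIntAux

variable {p d f : ℕ} {ω : (ZMod p)ˣ} {ζ : ℂ}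

/-- The additive character `a ↦ ζ^(a.val)`. -/
noncomputable def ee (p : ℕ) (ζ : ℂ) (a : ZMod p) : ℂ := ζ ^ a.val

lemma pow_val_mod (hp1 : ζ ^ p = 1) (m : ℕ) : ζ ^ (m % p) = ζ ^ m := by
  conv_rhs => rw [← Nat.mod_add_div m p, pow_add, pow_mul, hp1, one_pow, mul_one]

lemma ee_add [NeZero p] (hp1 : ζ ^ p = 1) (a b : ZMod p) :
    ee p ζ (a + b) = ee p ζ a * ee p ζ b := by
  rw [ee, ee, ee, ZMod.val_add, pow_val_mod hp1, pow_add]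

lemma ee_zero [NeZero p] : ee p ζ (0 : ZMod p) = 1 := by simp [ee]

lemma sum_ee_univ [NeZero p] (hp : 1 < p) (hζ : IsPrimitiveRoot ζ p) :
    ∑ a : ZMod p, ee p ζ a = 0 := by
  rw [← hζ.geom_sum_eq_zero hp]
  refine Finset.sum_nbij' (fun a => a.val) (fun m => (m : ZMod p)) ?_ ?_ ?_ ?_ ?_
  · intro a _; exact mem_range.2 a.val_lt
  · intro m _; exact mem_univ _
  · intro a _; exact ZMod.natCast_rightInverse a
  · intro m hm; exact ZMod.val_cast_of_lt (mem_range.1 hm)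
  · intro a _; rfl

/-- The subgroup of nonzero d-th powers, as a finset of `ZMod p`. -/
noncomputable def Hs (p d f : ℕ) (ω : (ZMod p)ˣ) : Finset (ZMod p) :=
  (Finset.range f).image (fun u => ((ω : ZMod p) ^ d) ^ u)

lemma mem_Hs {x : ZMod p} : x ∈ Hs p d f ω ↔ ∃ u, u < f ∧ ((ω : ZMod p) ^ d) ^ u = x := by
  simp [Hs]

lemma ord_c (hb : orderOf ((ω : ZMod p)) = d * f) (hd0 : 0 < d) :
    orderOf ((ω : ZMod p) ^ d) = f := by
  have h1 : ((ω : ZMod p) ^ d) = ((ω ^ d : (ZMod p)ˣ) : ZMod p) := by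
    rw [Units.val_pow_eq_pow_val]
  rw [h1, orderOf_units, orderOf_pow, ← orderOf_units, hb, Nat.gcd_comm,
    Nat.gcd_eq_left (dvd_mul_right d f), Nat.mul_div_cancel_left f hd0]

lemma Hs_one (hf0 : 0 < f) : (1 : ZMod p) ∈ Hs p d f ω :=
  mem_Hs.2 ⟨0, hf0, pow_zero _⟩

lemma Hs_ne_zero [Fact p.Prime] {x : ZMod p} (hx : x ∈ Hs p d f ω) : x ≠ 0 := by
  obtain ⟨u, _, rfl⟩ := mem_Hs.1 hx
  exact pow_ne_zero _ (pow_ne_zero _ (Units.ne_zero ω))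

lemma Hs_mul (hc : orderOf ((ω : ZMod p) ^ d) = f) (hf0 : 0 < f) {x y : ZMod p}
    (hx : x ∈ Hs p d f ω) (hy : y ∈ Hs p d f ω) : x * y ∈ Hs p d f ω := by
  obtain ⟨u, hu, rfl⟩ := mem_Hs.1 hx
  obtain ⟨v, hv, rfl⟩ := mem_Hs.1 hy
  refine mem_Hs.2 ⟨(u + v) % f, Nat.mod_lt _ hf0, ?_⟩
  rw [← hc, pow_mod_orderOf, pow_add]

lemma Hs_inv_mem [Fact p.Prime] (hc : orderOf ((ω : ZMod p) ^ d) = f) (hf0 : 0 < f)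
    {x : ZMod p} (hx : x ∈ Hs p d f ω) : x⁻¹ ∈ Hs p d f ω := by
  obtain ⟨u, hu, rfl⟩ := mem_Hs.1 hx
  have h1 : ((ω : ZMod p) ^ d) ^ u * ((ω : ZMod p) ^ d) ^ ((f - u) % f) = 1 := by
    rw [← pow_add]
    rcases Nat.eq_zero_or_pos u with rfl | hu0
    · simp
    · rw [Nat.mod_eq_of_lt (by omega), show u + (f - u) = f by omega, ← hc,
        pow_orderOf_eq_one]
  rw [← eq_inv_of_mul_eq_one_right h1]
  exact mem_Hs.2 ⟨(f - u) % f, Nat.mod_lt _ hf0, rfl⟩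

lemma Hs_sum_eq (hc : orderOf ((ω : ZMod p) ^ d) = f) (Φ : ZMod p → ℂ) :
    ∑ t ∈ Hs p d f ω, Φ t = ∑ u ∈ Finset.range f, Φ (((ω : ZMod p) ^ d) ^ u) := by
  rw [Hs, Finset.sum_image]
  intro u hu v hv huv
  exact pow_injOn_Iio_orderOf (by simpa [hc] using mem_range.1 hu)
    (by simpa [hc] using mem_range.1 hv) huv

lemma Hs_card (hc : orderOf ((ω : ZMod p) ^ d) = f) : (Hs p d f ω).card = f := by
  rw [Hs, Finset.card_image_of_injOn, card_range]
  intro u hu v hv huv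
  exact pow_injOn_Iio_orderOf (by simpa [hc] using mem_range.1 hu)
    (by simpa [hc] using mem_range.1 hv) huv

lemma Hs_shift [Fact p.Prime] (hc : orderOf ((ω : ZMod p) ^ d) = f) (hf0 : 0 < f)
    {h : ZMod p} (hh : h ∈ Hs p d f ω) (Φ : ZMod p → ℂ) :
    ∑ t ∈ Hs p d f ω, Φ (h * t) = ∑ t ∈ Hs p d f ω, Φ t := by
  refine Finset.sum_nbij' (fun t => h * t) (fun s => h⁻¹ * s) ?_ ?_ ?_ ?_ ?_
  · intro t ht; exact Hs_mul hc hf0 hh ht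
  · intro s hs; exact Hs_mul hc hf0 (Hs_inv_mem hc hf0 hh) hs
  · intro t _; field_simp [Hs_ne_zero hh]
  · intro s _; field_simp [Hs_ne_zero hh]
  · intro t _; rfl

lemma Hs_shift2 [Fact p.Prime] (hc : orderOf ((ω : ZMod p) ^ d) = f) (hf0 : 0 < f)
    {h : ZMod p} (hh : h ∈ Hs p d f ω) (Ψ : ZMod p → ZMod p → ℂ) :
    ∑ a ∈ Hs p d f ω, ∑ b ∈ Hs p d f ω, Ψ (h * a) (h * b)
      = ∑ a ∈ Hs p d f ω, ∑ b ∈ Hs p d f ω, Ψ a b :=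
  Eq.trans (Finset.sum_congr rfl fun a _ => Hs_shift hc hf0 hh (fun b => Ψ (h * a) b))
    (Hs_shift hc hf0 hh (fun a => ∑ b ∈ Hs p d f ω, Ψ a b))

lemma Hs_shift3 [Fact p.Prime] (hc : orderOf ((ω : ZMod p) ^ d) = f) (hf0 : 0 < f)
    {h : ZMod p} (hh : h ∈ Hs p d f ω) (Ψ : ZMod p → ZMod p → ZMod p → ℂ) :
    ∑ a ∈ Hs p d f ω, ∑ b ∈ Hs p d f ω, ∑ c ∈ Hs p d f ω, Ψ (h * a) (h * b) (h * c)
      = ∑ a ∈ Hs p d f ω, ∑ b ∈ Hs p d f ω, ∑ c ∈ Hs p d f ω, Ψ a b c :=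
  Eq.trans (Finset.sum_congr rfl fun a _ => Hs_shift2 hc hf0 hh (fun b c => Ψ (h * a) b c))
    (Hs_shift hc hf0 hh (fun a => ∑ b ∈ Hs p d f ω, ∑ c ∈ Hs p d f ω, Ψ a b c))

lemma Hs_shift4 [Fact p.Prime] (hc : orderOf ((ω : ZMod p) ^ d) = f) (hf0 : 0 < f)
    {h : ZMod p} (hh : h ∈ Hs p d f ω) (Ψ : ZMod p → ZMod p → ZMod p → ZMod p → ℂ) :
    ∑ a ∈ Hs p d f ω, ∑ b ∈ Hs p d f ω, ∑ c ∈ Hs p d f ω, ∑ e ∈ Hs p d f ω,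
        Ψ (h * a) (h * b) (h * c) (h * e)
      = ∑ a ∈ Hs p d f ω, ∑ b ∈ Hs p d f ω, ∑ c ∈ Hs p d f ω, ∑ e ∈ Hs p d f ω, Ψ a b c e :=
  Eq.trans (Finset.sum_congr rfl fun a _ => Hs_shift3 hc hf0 hh (fun b c e => Ψ (h * a) b c e))
    (Hs_shift hc hf0 hh
      (fun a => ∑ b ∈ Hs p d f ω, ∑ c ∈ Hs p d f ω, ∑ e ∈ Hs p d f ω, Ψ a b c e))

lemma exists_rep [Fact p.Prime] (hb : orderOf ((ω : ZMod p)) = d * f)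
    (hd0 : 0 < d) (hf0 : 0 < f) (hω : ∀ x : (ZMod p)ˣ, ∃ n : ℕ, ω ^ n = x)
    {y : ZMod p} (hy : y ≠ 0) :
    ∃ i, i < d ∧ ∃ u, u < f ∧ (ω : ZMod p) ^ i * ((ω : ZMod p) ^ d) ^ u = y := by
  have hyu : IsUnit y := isUnit_iff_ne_zero.2 hy
  obtain ⟨x, rfl⟩ := hyu
  obtain ⟨n, rfl⟩ := hω x
  have hdf0 : 0 < d * f := Nat.mul_pos hd0 hf0
  refine ⟨n % d, Nat.mod_lt _ hd0, n % (d * f) / d, ?_, ?_⟩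
  · exact Nat.div_lt_of_lt_mul (Nat.mod_lt _ hdf0)
  · rw [← pow_mul, ← pow_add]
    have h1 : n % (d * f) % d = n % d := Nat.mod_mod_of_dvd n (dvd_mul_right d f)
    have h2 := Nat.div_add_mod (n % (d * f)) d
    have h3 : n % d + d * (n % (d * f) / d) = n % (d * f) := by omega
    rw [h3, ← hb, pow_mod_orderOf, Units.val_pow_eq_pow_val]

lemma coset_unique [Fact p.Prime] (hb : orderOf ((ω : ZMod p)) = d * f)
    (hd0 : 0 < d) {i j : ℕ} (hi : i < d) (hj : j < d) {t s : ZMod p}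
    (ht : t ∈ Hs p d f ω) (hs : s ∈ Hs p d f ω)
    (h : (ω : ZMod p) ^ i * t = (ω : ZMod p) ^ j * s) : i = j := by
  obtain ⟨u, hu, rfl⟩ := mem_Hs.1 ht
  obtain ⟨v, hv, rfl⟩ := mem_Hs.1 hs
  rw [← pow_mul, ← pow_add, ← pow_mul, ← pow_add, ← Units.val_pow_eq_pow_val,
    ← Units.val_pow_eq_pow_val] at h
  have hm := pow_eq_pow_iff_modEq.1 (Units.ext h)
  rw [← orderOf_units, hb] at hm
  have hm2 : (i + d * u) % d = (j + d * v) % d :=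
    (Nat.ModEq.of_dvd (dvd_mul_right d f) hm) 
  rw [Nat.add_mul_mod_self_left, Nat.add_mul_mod_self_left] at hm2
  rw [Nat.mod_eq_of_lt hi, Nat.mod_eq_of_lt hj] at hm2
  exact hm2

lemma sum_ind_eq [Fact p.Prime] {y : ZMod p} {j : ℕ} :
    ∑ s ∈ Hs p d f ω, (if y = (ω : ZMod p) ^ j * s then (1 : ℂ) else 0)
      = if ∃ s ∈ Hs p d f ω, y = (ω : ZMod p) ^ j * s then 1 else 0 := by
  by_cases h : ∃ s ∈ Hs p d f ω, y = (ω : ZMod p) ^ j * s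
  · obtain ⟨s₀, hs₀, hy⟩ := h
    rw [if_pos ⟨s₀, hs₀, hy⟩, Finset.sum_eq_single s₀]
    · rw [if_pos hy]
    · intro s hs hne
      rw [if_neg]
      intro h'
      exact hne (mul_left_cancel₀ (pow_ne_zero _ (Units.ne_zero ω)) (hy.symm.trans h')).symm
    · intro h'; exact absurd hs₀ h'
  · rw [if_neg h, Finset.sum_eq_zero]
    intro s hs
    rw [if_neg (fun h' => h ⟨s, hs, h'⟩)]

lemma split_sum [Fact p.Prime] (hb : orderOf ((ω : ZMod p)) = d * f)
    (hd0 : 0 < d) (hf0 : 0 < f) (hω : ∀ x : (ZMod p)ˣ, ∃ n : ℕ, ω ^ n = x)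
    (Φ : ZMod p → ℂ) (hΦ : ∀ h ∈ Hs p d f ω, ∀ x : ZMod p, Φ (x * h) = Φ x)
    (y : ZMod p) :
    Φ y = (if y = 0 then 1 else 0) * Φ 0
      + ∑ i ∈ Finset.range d,
          (if ∃ s ∈ Hs p d f ω, y = (ω : ZMod p) ^ i * s then (1 : ℂ) else 0)
            * Φ ((ω : ZMod p) ^ i) := by
  by_cases hy : y = 0
  · subst hy
    rw [if_pos rfl, one_mul, Finset.sum_eq_zero, add_zero]
    intro i _
    rw [if_neg, zero_mul]
    rintro ⟨s, hs, h0⟩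
    exact (mul_ne_zero (pow_ne_zero _ (Units.ne_zero ω)) (Hs_ne_zero hs)) h0.symm
  · rw [if_neg hy, zero_mul, zero_add]
    obtain ⟨i₀, hi₀, u, hu, hrep⟩ := exists_rep hb hd0 hf0 hω hy
    have hmem : ((ω : ZMod p) ^ d) ^ u ∈ Hs p d f ω := mem_Hs.2 ⟨u, hu, rfl⟩
    rw [Finset.sum_eq_single i₀]
    · rw [if_pos ⟨_, hmem, hrep.symm⟩, one_mul, ← hrep, hΦ _ hmem _]
    · intro j hj hne
      rw [if_neg, zero_mul]
      rintro ⟨s, hs, hy'⟩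
      exact hne (coset_unique hb hd0 (mem_range.1 hj) hi₀ hs hmem (hy'.symm.trans hrep.symm))
    · intro h'; exact absurd (mem_range.2 hi₀) h'

lemma cycNum_complex [Fact p.Prime] (hc : orderOf ((ω : ZMod p) ^ d) = f) (i j : ℕ) :
    ((cycNum p d f ω i j : ℕ) : ℂ)
      = ∑ t ∈ Hs p d f ω, ∑ s ∈ Hs p d f ω,
          (if (1 : ZMod p) + (ω : ZMod p) ^ i * t = (ω : ZMod p) ^ j * s then (1 : ℂ) else 0) := by
  have he : ∀ uv : ℕ × ℕ,
      (uv.1 < f ∧ uv.2 < f ∧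
        (1 : ZMod p) + (ω : ZMod p) ^ (d * uv.1 + i) = (ω : ZMod p) ^ (d * uv.2 + j))
      ↔ uv ∈ ((Finset.range f ×ˢ Finset.range f).filter
          (fun uv : ℕ × ℕ =>
            (1 : ZMod p) + (ω : ZMod p) ^ (d * uv.1 + i) = (ω : ZMod p) ^ (d * uv.2 + j))) := by
    intro uv
    simp [Finset.mem_filter, Finset.mem_product, and_assoc]
  have h1 : cycNum p d f ω i j = ((Finset.range f ×ˢ Finset.range f).filter
      (fun uv : ℕ × ℕ =>
        (1 : ZMod p) + (ω : ZMod p) ^ (d * uv.1 + i) = (ω : ZMod p) ^ (d * uv.2 + j))).card := by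
    rw [cycNum, Nat.card_congr (Equiv.subtypeEquivRight he), Nat.card_eq_fintype_card,
      Fintype.card_coe]
  rw [h1, Finset.card_filter]
  push_cast
  rw [Finset.sum_product]
  rw [Hs_sum_eq hc (fun t => ∑ s ∈ Hs p d f ω,
    if (1 : ZMod p) + (ω : ZMod p) ^ i * t = (ω : ZMod p) ^ j * s then (1 : ℂ) else 0)]
  refine Finset.sum_congr rfl fun u hu => ?_
  rw [Hs_sum_eq hc (fun s =>
    if (1 : ZMod p) + (ω : ZMod p) ^ i * (((ω : ZMod p) ^ d) ^ u) = (ω : ZMod p) ^ j * s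
    then (1 : ℂ) else 0)]
  refine Finset.sum_congr rfl fun v hv => ?_
  have e1 : (ω : ZMod p) ^ (d * u + i) = (ω : ZMod p) ^ i * (((ω : ZMod p) ^ d) ^ u) := by
    rw [← pow_mul, ← pow_add, add_comm]
  have e2 : (ω : ZMod p) ^ (d * v + j) = (ω : ZMod p) ^ j * (((ω : ZMod p) ^ d) ^ v) := by
    rw [← pow_mul, ← pow_add, add_comm]
  rw [e1, e2]

lemma cyc_shift [Fact p.Prime] (hc : orderOf ((ω : ZMod p) ^ d) = f) (hf0 : 0 < f) (i j : ℕ) :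
    ∑ t ∈ Hs p d f ω,
        (if ∃ s ∈ Hs p d f ω, (ω : ZMod p) ^ i + t = (ω : ZMod p) ^ j * s then (1 : ℂ) else 0)
      = ((cycNum p d f ω i j : ℕ) : ℂ) := by
  rw [cycNum_complex hc]
  have h0 : ∑ t ∈ Hs p d f ω,
      (if ∃ s ∈ Hs p d f ω, (ω : ZMod p) ^ i + t = (ω : ZMod p) ^ j * s then (1 : ℂ) else 0)
      = ∑ t ∈ Hs p d f ω, ∑ s ∈ Hs p d f ω,
          (if (ω : ZMod p) ^ i + t = (ω : ZMod p) ^ j * s then (1 : ℂ) else 0) :=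
    Finset.sum_congr rfl fun t _ => sum_ind_eq.symm
  rw [h0]
  calc ∑ t ∈ Hs p d f ω, ∑ s ∈ Hs p d f ω,
          (if (ω : ZMod p) ^ i + t = (ω : ZMod p) ^ j * s then (1 : ℂ) else 0)
      = ∑ x ∈ Hs p d f ω ×ˢ Hs p d f ω,
          (if (ω : ZMod p) ^ i + x.1 = (ω : ZMod p) ^ j * x.2 then (1 : ℂ) else 0) :=
        (Finset.sum_product (Hs p d f ω) (Hs p d f ω) (fun x : ZMod p × ZMod p =>
          if (ω : ZMod p) ^ i + x.1 = (ω : ZMod p) ^ j * x.2 then (1 : ℂ) else 0)).symm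
    _ = ∑ x ∈ Hs p d f ω ×ˢ Hs p d f ω,
          (if (1 : ZMod p) + (ω : ZMod p) ^ i * x.1 = (ω : ZMod p) ^ j * x.2 then (1 : ℂ) else 0) := ?_
    _ = ∑ t ∈ Hs p d f ω, ∑ s ∈ Hs p d f ω,
          (if (1 : ZMod p) + (ω : ZMod p) ^ i * t = (ω : ZMod p) ^ j * s then (1 : ℂ) else 0) :=
        Finset.sum_product (Hs p d f ω) (Hs p d f ω) (fun x : ZMod p × ZMod p =>
          if (1 : ZMod p) + (ω : ZMod p) ^ i * x.1 = (ω : ZMod p) ^ j * x.2 then (1 : ℂ) else 0)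
  refine Finset.sum_nbij' (fun x => (x.1⁻¹, x.2 * x.1⁻¹)) (fun x => (x.1⁻¹, x.2 * x.1⁻¹))
    ?_ ?_ ?_ ?_ ?_
  · intro a ha
    rw [Finset.mem_product] at ha ⊢
    exact ⟨Hs_inv_mem hc hf0 ha.1, Hs_mul hc hf0 ha.2 (Hs_inv_mem hc hf0 ha.1)⟩
  · intro a ha
    rw [Finset.mem_product] at ha ⊢
    exact ⟨Hs_inv_mem hc hf0 ha.1, Hs_mul hc hf0 ha.2 (Hs_inv_mem hc hf0 ha.1)⟩
  · intro a ha
    rw [Finset.mem_product] at ha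
    have h1 : a.1 ≠ 0 := Hs_ne_zero ha.1
    have : a.1⁻¹ ≠ 0 := inv_ne_zero h1
    refine Prod.ext (by simp) ?_
    field_simp
  · intro a ha
    rw [Finset.mem_product] at ha
    have h1 : a.1 ≠ 0 := Hs_ne_zero ha.1
    have : a.1⁻¹ ≠ 0 := inv_ne_zero h1
    refine Prod.ext (by simp) ?_
    field_simp
  · intro a ha
    rw [Finset.mem_product] at ha
    have h1 : a.1 ≠ 0 := Hs_ne_zero ha.1
    have hinv : a.1 * a.1⁻¹ = 1 := mul_inv_cancel₀ h1
    refine if_congr ⟨fun h => ?_, fun h => ?_⟩ rfl rfl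
    · linear_combination a.1⁻¹ * h - hinv
    · linear_combination a.1 * h - ((ω : ZMod p) ^ i - (ω : ZMod p) ^ j * a.2) * hinv

lemma sum_units [Fact p.Prime] (hb : orderOf ((ω : ZMod p)) = d * f)
    (hd0 : 0 < d) (hf0 : 0 < f) (hω : ∀ x : (ZMod p)ˣ, ∃ n : ℕ, ω ^ n = x)
    (Φ : ZMod p → ℂ) :
    ∑ i ∈ Finset.range d, ∑ t ∈ Hs p d f ω, Φ ((ω : ZMod p) ^ i * t)
      = ∑ y ∈ Finset.univ.erase (0 : ZMod p), Φ y := by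
  have hc := ord_c hb hd0
  calc ∑ i ∈ Finset.range d, ∑ t ∈ Hs p d f ω, Φ ((ω : ZMod p) ^ i * t)
      = ∑ i ∈ Finset.range d, ∑ u ∈ Finset.range f, Φ ((ω : ZMod p) ^ i * ((ω : ZMod p) ^ d) ^ u) :=
        Finset.sum_congr rfl fun i _ => Hs_sum_eq hc (fun t => Φ ((ω : ZMod p) ^ i * t))
    _ = ∑ x ∈ Finset.range d ×ˢ Finset.range f, Φ ((ω : ZMod p) ^ x.1 * ((ω : ZMod p) ^ d) ^ x.2) :=
        (Finset.sum_product (Finset.range d) (Finset.range f)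
          (fun x : ℕ × ℕ => Φ ((ω : ZMod p) ^ x.1 * ((ω : ZMod p) ^ d) ^ x.2))).symm
    _ = ∑ y ∈ Finset.univ.erase (0 : ZMod p), Φ y := ?_
  refine Finset.sum_nbij (fun x => (ω : ZMod p) ^ x.1 * ((ω : ZMod p) ^ d) ^ x.2) ?_ ?_ ?_ ?_
  · intro a _
    exact Finset.mem_erase.2 ⟨mul_ne_zero (pow_ne_zero _ (Units.ne_zero ω))
      (pow_ne_zero _ (pow_ne_zero _ (Units.ne_zero ω))), Finset.mem_univ _⟩
  · intro a ha a' ha' h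
    simp only [Finset.coe_product, Set.mem_prod, Finset.mem_coe, Finset.mem_range] at ha ha'
    simp only [] at h
    rw [← pow_mul, ← pow_add, ← pow_mul, ← pow_add, ← Units.val_pow_eq_pow_val,
      ← Units.val_pow_eq_pow_val] at h
    have hm := pow_eq_pow_iff_modEq.1 (Units.ext h)
    rw [← orderOf_units, hb] at hm
    have hlt : ∀ x : ℕ × ℕ, x.1 < d → x.2 < f → x.1 + d * x.2 < d * f := by
      intro x h1 h2
      calc x.1 + d * x.2 < d + d * x.2 := Nat.add_lt_add_right h1 _
        _ = d * (x.2 + 1) := by rw [Nat.mul_succ, Nat.add_comm]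
        _ ≤ d * f := Nat.mul_le_mul_left d h2
    have heq : a.1 + d * a.2 = a'.1 + d * a'.2 := by
      have h1 := hm
      unfold Nat.ModEq at h1
      rwa [Nat.mod_eq_of_lt (hlt a ha.1 ha.2), Nat.mod_eq_of_lt (hlt a' ha'.1 ha'.2)] at h1
    have h5 : a.1 % d = a'.1 % d := by
      rw [← Nat.add_mul_mod_self_left a.1 d a.2, heq, Nat.add_mul_mod_self_left]
    rw [Nat.mod_eq_of_lt ha.1, Nat.mod_eq_of_lt ha'.1] at h5
    have h6 : a.2 = a'.2 := by
      rw [h5] at heq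
      exact Nat.eq_of_mul_eq_mul_left hd0 (Nat.add_left_cancel heq)
    exact Prod.ext h5 h6
  · intro y hy
    have hne : y ≠ 0 := (Finset.mem_erase.1 (Finset.mem_coe.1 hy)).1
    obtain ⟨i, hi, u, hu, he⟩ := exists_rep hb hd0 hf0 hω hne
    exact ⟨(i, u), by simp [hi, hu], he⟩
  · intro a _; rfl

lemma sum_erase_ee [Fact p.Prime] (hp1 : 1 < p) (hζ : IsPrimitiveRoot ζ p) (X : ZMod p) :
    ∑ y ∈ Finset.univ.erase (0 : ZMod p), ee p ζ (y * X)
      = (p : ℂ) * (if X = 0 then 1 else 0) - 1 := by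
  haveI : NeZero p := ⟨by omega⟩
  by_cases hX : X = 0
  · subst hX
    simp only [mul_zero, ee_zero, if_pos rfl, Finset.sum_const,
      Finset.card_erase_of_mem (Finset.mem_univ _), Finset.card_univ, ZMod.card,
      nsmul_eq_mul, mul_one]
    push_cast [Nat.cast_sub (by omega : 1 ≤ p)]
    ring
  · rw [if_neg hX, mul_zero, zero_sub]
    have h2 : ∑ y ∈ Finset.univ.erase (0 : ZMod p), ee p ζ (y * X)
        = ∑ y ∈ Finset.univ.erase (0 : ZMod p), ee p ζ y := by
      refine Finset.sum_nbij' (fun y => y * X) (fun z => z * X⁻¹) ?_ ?_ ?_ ?_ ?_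
      · intro y hy
        exact Finset.mem_erase.2 ⟨mul_ne_zero (Finset.mem_erase.1 hy).1 hX, Finset.mem_univ _⟩
      · intro z hz
        exact Finset.mem_erase.2 ⟨mul_ne_zero (Finset.mem_erase.1 hz).1 (inv_ne_zero hX),
          Finset.mem_univ _⟩
      · intro y _; field_simp
      · intro z _; field_simp
      · intro y _; rfl
    rw [h2]
    have h3 : ee p ζ (0 : ZMod p) + ∑ y ∈ Finset.univ.erase (0 : ZMod p), ee p ζ y
        = ∑ y : ZMod p, ee p ζ y := Finset.add_sum_erase _ _ (Finset.mem_univ 0)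
    rw [sum_ee_univ hp1 hζ, ee_zero] at h3
    linear_combination h3

lemma comm3 {α β γ : Type*} (s : Finset α) (t : Finset β) (u : Finset γ)
    (g : α → β → γ → ℂ) :
    ∑ a ∈ s, ∑ b ∈ t, ∑ c ∈ u, g a b c = ∑ c ∈ u, ∑ a ∈ s, ∑ b ∈ t, g a b c :=
  Eq.trans (Finset.sum_congr rfl fun a _ => Finset.sum_comm) Finset.sum_comm

lemma comm4 {α β γ δ : Type*} (s : Finset α) (t : Finset β) (u : Finset γ) (v : Finset δ)
    (g : α → β → γ → δ → ℂ) :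
    ∑ a ∈ s, ∑ b ∈ t, ∑ c ∈ u, ∑ e ∈ v, g a b c e
      = ∑ e ∈ v, ∑ a ∈ s, ∑ b ∈ t, ∑ c ∈ u, g a b c e :=
  Eq.trans (Finset.sum_congr rfl fun a _ => comm3 t u v (fun b c e => g a b c e))
    Finset.sum_comm

lemma push_in1 {α β : Type*} (s : Finset α) (t : Finset β) (g : α → β → ℂ) :
    ∑ y ∈ s, ∑ a ∈ t, g y a = ∑ a ∈ t, ∑ y ∈ s, g y a := Finset.sum_comm

lemma push_in2 {α β : Type*} (s : Finset α) (t : Finset β) (g : α → β → β → ℂ) :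
    ∑ y ∈ s, ∑ a ∈ t, ∑ b ∈ t, g y a b = ∑ a ∈ t, ∑ b ∈ t, ∑ y ∈ s, g y a b :=
  Eq.trans Finset.sum_comm (Finset.sum_congr rfl fun a _ => Finset.sum_comm)

lemma push_in4 {α β : Type*} (s : Finset α) (t : Finset β) (g : α → β → β → β → β → ℂ) :
    ∑ y ∈ s, ∑ a ∈ t, ∑ b ∈ t, ∑ c ∈ t, ∑ e ∈ t, g y a b c e
      = ∑ a ∈ t, ∑ b ∈ t, ∑ c ∈ t, ∑ e ∈ t, ∑ y ∈ s, g y a b c e :=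
  Eq.trans Finset.sum_comm (Finset.sum_congr rfl fun a _ =>
    Eq.trans Finset.sum_comm (Finset.sum_congr rfl fun b _ =>
      Eq.trans Finset.sum_comm (Finset.sum_congr rfl fun c _ => Finset.sum_comm)))

lemma expand1 {M : Type*} (s : Finset M) (F G : M → ℂ) :
    (∑ t ∈ s, F t) * (∑ r ∈ s, G r) = ∑ r ∈ s, ∑ t1 ∈ s, F t1 * G r := by
  rw [Finset.sum_mul_sum]
  exact Finset.sum_comm

lemma expand2 {M : Type*} (s : Finset M) (F G : M → ℂ) :
    (∑ t ∈ s, F t) ^ 2 * (∑ r ∈ s, G r)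
      = ∑ r ∈ s, ∑ t1 ∈ s, ∑ t2 ∈ s, F t2 * (F t1 * G r) := by
  rw [show (∑ t ∈ s, F t) ^ 2 * (∑ r ∈ s, G r)
    = (∑ t ∈ s, F t) * ((∑ t ∈ s, F t) * (∑ r ∈ s, G r)) from by ring]
  simp only [Finset.sum_mul, Finset.mul_sum]

lemma expand4 {M : Type*} (s : Finset M) (F G : M → ℂ) :
    (∑ t ∈ s, F t) ^ 4 * (∑ r ∈ s, G r)
      = ∑ r ∈ s, ∑ t1 ∈ s, ∑ t2 ∈ s, ∑ t3 ∈ s, ∑ t4 ∈ s,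
          F t4 * (F t3 * (F t2 * (F t1 * G r))) := by
  rw [show (∑ t ∈ s, F t) ^ 4 * (∑ r ∈ s, G r)
    = (∑ t ∈ s, F t) * ((∑ t ∈ s, F t) * ((∑ t ∈ s, F t) * ((∑ t ∈ s, F t) * (∑ r ∈ s, G r))))
    from by ring]
  simp only [Finset.sum_mul, Finset.mul_sum]

lemma theta_lt (hd : 2 ≤ d) : theta d f < d := by
  unfold theta
  split
  · omega
  · exact Nat.div_lt_self (by omega) one_lt_two

lemma half_pow [Fact p.Prime] (hb : orderOf ((ω : ZMod p)) = d * f)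
    (h2 : 2 ∣ d * f) (hdf0 : 0 < d * f) :
    ((ω : ZMod p)) ^ (d * f / 2) = -1 := by
  obtain ⟨k, hk⟩ := h2
  have hk0 : 0 < k := by omega
  have hx2 : ((ω : ZMod p)) ^ (d * f / 2) * ((ω : ZMod p)) ^ (d * f / 2) = 1 := by
    rw [← pow_add, show d * f / 2 + d * f / 2 = d * f by omega, ← hb, pow_orderOf_eq_one]
  have hx1 : ((ω : ZMod p)) ^ (d * f / 2) ≠ 1 := by
    intro h
    have hdvd := orderOf_dvd_of_pow_eq_one h
    rw [hb] at hdvd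
    have := Nat.le_of_dvd (by omega) hdvd
    omega
  rcases mul_self_eq_one_iff.1 hx2 with h | h
  · exact absurd h hx1
  · exact h

lemma minus_one_coset [Fact p.Prime] (hb : orderOf ((ω : ZMod p)) = d * f)
    (hd : 2 ≤ d) (hf0 : 0 < f) (h2 : 2 ∣ d * f) :
    ∃ h ∈ Hs p d f ω, (-1 : ZMod p) = (ω : ZMod p) ^ (theta d f) * h := by
  have hdf0 : 0 < d * f := by positivity
  have hhalf := half_pow hb h2 hdf0
  by_cases hfe : Even f
  · obtain ⟨k, hk⟩ := hfe
    have hk0 : 0 < k := by omega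
    refine ⟨((ω : ZMod p) ^ d) ^ k, mem_Hs.2 ⟨k, by omega, rfl⟩, ?_⟩
    rw [theta, if_pos ⟨k, hk⟩, pow_zero, one_mul, ← pow_mul, ← hhalf]
    congr 1
    subst hk
    have h3 : d * (k + k) = 2 * (d * k) := by ring
    rw [h3, Nat.mul_div_cancel_left _ (by norm_num : 0 < 2)]
  · have hfo : Odd f := Nat.not_even_iff_odd.1 hfe
    have hde : Even d := by
      rcases Nat.even_mul.1 (even_iff_two_dvd.2 h2) with h | h
      · exact h
      · exact absurd h (Nat.not_even_iff_odd.2 hfo)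
    obtain ⟨m, hm⟩ := hde
    obtain ⟨l, hl⟩ := hfo
    have hm0 : 0 < m := by omega
    refine ⟨((ω : ZMod p) ^ d) ^ l, mem_Hs.2 ⟨l, by omega, rfl⟩, ?_⟩
    rw [theta, if_neg hfe, ← pow_mul, ← pow_add, ← hhalf]
    congr 1
    have hd2 : d / 2 = m := by omega
    rw [hd2]
    subst hm hl
    have h3 : (m + m) * (2 * l + 1) = 2 * (m + (m + m) * l) := by ring
    rw [h3, Nat.mul_div_cancel_left _ (by norm_num : 0 < 2)]

lemma A1_pow [Fact p.Prime] (hb : orderOf ((ω : ZMod p)) = d * f)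
    (hd : 2 ≤ d) (hf0 : 0 < f) (h2 : 2 ∣ d * f) {k : ℕ} (hk : k < d) :
    ∑ t ∈ Hs p d f ω, (if (ω : ZMod p) ^ k + t = 0 then (1 : ℂ) else 0)
      = if k = theta d f then 1 else 0 := by
  have hd0 : 0 < d := by omega
  have hc := ord_c hb hd0
  obtain ⟨h0, hh0, hm1⟩ := minus_one_coset hb hd hf0 h2
  have step1 : ∑ t ∈ Hs p d f ω, (if (ω : ZMod p) ^ k + t = 0 then (1 : ℂ) else 0)
      = ∑ t ∈ Hs p d f ω,
          (if (ω : ZMod p) ^ k = (ω : ZMod p) ^ (theta d f) * (h0 * t) then (1 : ℂ) else 0) := by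
    refine Finset.sum_congr rfl fun t _ => if_congr ⟨fun h => ?_, fun h => ?_⟩ rfl rfl
    · linear_combination h + t * hm1
    · linear_combination h - t * hm1
  have step2 : ∑ t ∈ Hs p d f ω,
        (if (ω : ZMod p) ^ k = (ω : ZMod p) ^ (theta d f) * (h0 * t) then (1 : ℂ) else 0)
      = ∑ t ∈ Hs p d f ω,
          (if (ω : ZMod p) ^ k = (ω : ZMod p) ^ (theta d f) * t then (1 : ℂ) else 0) := by
    have := Hs_shift hc hf0 hh0
      (fun t => if (ω : ZMod p) ^ k = (ω : ZMod p) ^ (theta d f) * t then (1 : ℂ) else 0)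
    exact this
  rw [step1, step2, sum_ind_eq]
  by_cases hkθ : k = theta d f
  · subst hkθ
    rw [if_pos ⟨1, Hs_one hf0, (mul_one _).symm⟩, if_pos rfl]
  · rw [if_neg, if_neg hkθ]
    rintro ⟨s, hs, heq⟩
    refine hkθ (coset_unique hb hd0 hk (theta_lt hd) (Hs_one hf0) hs ?_)
    rw [mul_one]
    exact heq

lemma gp_eq [Fact p.Prime] (hc : orderOf ((ω : ZMod p) ^ d) = f) (i : ℕ) :
    gaussPeriod p d f ω ζ i = ∑ t ∈ Hs p d f ω, ee p ζ ((ω : ZMod p) ^ i * t) := by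
  rw [gaussPeriod, Hs_sum_eq hc (fun t => ee p ζ ((ω : ZMod p) ^ i * t))]
  refine Finset.sum_congr rfl fun u _ => ?_
  rw [ee]
  congr 2
  rw [← pow_mul, ← pow_add, add_comm]

noncomputable def A1x (p d f : ℕ) (ω : (ZMod p)ˣ) (x : ZMod p) : ℂ :=
  ∑ t ∈ Hs p d f ω, if x + t = 0 then (1 : ℂ) else 0

noncomputable def A2x (p d f : ℕ) (ω : (ZMod p)ˣ) (x : ZMod p) : ℂ :=
  ∑ t ∈ Hs p d f ω, A1x p d f ω (x + t)

noncomputable def A3x (p d f : ℕ) (ω : (ZMod p)ˣ) (x : ZMod p) : ℂ :=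
  ∑ t ∈ Hs p d f ω, A2x p d f ω (x + t)

lemma A1x_inv [Fact p.Prime] (hc : orderOf ((ω : ZMod p) ^ d) = f) (hf0 : 0 < f) :
    ∀ h ∈ Hs p d f ω, ∀ x : ZMod p, A1x p d f ω (x * h) = A1x p d f ω x := by
  intro h hh x
  have h1 := Hs_shift hc hf0 hh (fun t => if x * h + t = 0 then (1 : ℂ) else 0)
  refine h1.symm.trans (Finset.sum_congr rfl fun t _ => if_congr ⟨fun hz => ?_, fun hz => ?_⟩ rfl rfl)
  · have h3 : h * (x + t) = 0 := by linear_combination hz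
    rcases mul_eq_zero.1 h3 with h4 | h4
    · exact absurd h4 (Hs_ne_zero hh)
    · exact h4
  · linear_combination h * hz

lemma A2x_inv [Fact p.Prime] (hc : orderOf ((ω : ZMod p) ^ d) = f) (hf0 : 0 < f) :
    ∀ h ∈ Hs p d f ω, ∀ x : ZMod p, A2x p d f ω (x * h) = A2x p d f ω x := by
  intro h hh x
  have h1 := Hs_shift hc hf0 hh (fun t => A1x p d f ω (x * h + t))
  refine h1.symm.trans ?_
  refine Finset.sum_congr rfl fun t _ => ?_
  rw [show x * h + h * t = (x + t) * h from by ring, A1x_inv hc hf0 h hh]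

lemma A3x_inv [Fact p.Prime] (hc : orderOf ((ω : ZMod p) ^ d) = f) (hf0 : 0 < f) :
    ∀ h ∈ Hs p d f ω, ∀ x : ZMod p, A3x p d f ω (x * h) = A3x p d f ω x := by
  intro h hh x
  have h1 := Hs_shift hc hf0 hh (fun t => A2x p d f ω (x * h + t))
  refine h1.symm.trans ?_
  refine Finset.sum_congr rfl fun t _ => ?_
  rw [show x * h + h * t = (x + t) * h from by ring, A2x_inv hc hf0 h hh]

lemma A1x_zero [Fact p.Prime] : A1x p d f ω 0 = 0 := by
  refine Finset.sum_eq_zero fun t ht => ?_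
  rw [zero_add, if_neg (Hs_ne_zero ht)]

lemma key_split [Fact p.Prime] (hb : orderOf ((ω : ZMod p)) = d * f)
    (hd0 : 0 < d) (hf0 : 0 < f) (hω : ∀ x : (ZMod p)ˣ, ∃ n : ℕ, ω ^ n = x)
    (Φ : ZMod p → ℂ) (hΦ : ∀ h ∈ Hs p d f ω, ∀ x : ZMod p, Φ (x * h) = Φ x) (i : ℕ) :
    ∑ t ∈ Hs p d f ω, Φ ((ω : ZMod p) ^ i + t)
      = A1x p d f ω ((ω : ZMod p) ^ i) * Φ 0
        + ∑ j ∈ Finset.range d, ((cycNum p d f ω i j : ℕ) : ℂ) * Φ ((ω : ZMod p) ^ j) := by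
  have hc := ord_c hb hd0
  calc ∑ t ∈ Hs p d f ω, Φ ((ω : ZMod p) ^ i + t)
      = ∑ t ∈ Hs p d f ω, ((if (ω : ZMod p) ^ i + t = 0 then (1 : ℂ) else 0) * Φ 0
          + ∑ j ∈ Finset.range d,
            (if ∃ s ∈ Hs p d f ω, (ω : ZMod p) ^ i + t = (ω : ZMod p) ^ j * s
              then (1 : ℂ) else 0) * Φ ((ω : ZMod p) ^ j)) :=
        Finset.sum_congr rfl fun t _ => split_sum hb hd0 hf0 hω Φ hΦ _
    _ = (∑ t ∈ Hs p d f ω, (if (ω : ZMod p) ^ i + t = 0 then (1 : ℂ) else 0) * Φ 0)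
          + ∑ t ∈ Hs p d f ω, ∑ j ∈ Finset.range d,
            (if ∃ s ∈ Hs p d f ω, (ω : ZMod p) ^ i + t = (ω : ZMod p) ^ j * s
              then (1 : ℂ) else 0) * Φ ((ω : ZMod p) ^ j) := Finset.sum_add_distrib
    _ = A1x p d f ω ((ω : ZMod p) ^ i) * Φ 0
          + ∑ j ∈ Finset.range d,
            (∑ t ∈ Hs p d f ω, (if ∃ s ∈ Hs p d f ω, (ω : ZMod p) ^ i + t = (ω : ZMod p) ^ j * s
              then (1 : ℂ) else 0)) * Φ ((ω : ZMod p) ^ j) := by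
        congr 1
        · rw [A1x, Finset.sum_mul]
        · rw [Finset.sum_comm]
          exact Finset.sum_congr rfl fun j _ => (Finset.sum_mul _ _ _).symm
    _ = A1x p d f ω ((ω : ZMod p) ^ i) * Φ 0
          + ∑ j ∈ Finset.range d, ((cycNum p d f ω i j : ℕ) : ℂ) * Φ ((ω : ZMod p) ^ j) := by
        refine congrArg _ (Finset.sum_congr rfl fun j _ => ?_)
        rw [cyc_shift hc hf0 i j]

lemma A2x_pow [Fact p.Prime] (hb : orderOf ((ω : ZMod p)) = d * f)
    (hd : 2 ≤ d) (hf0 : 0 < f) (hω : ∀ x : (ZMod p)ˣ, ∃ n : ℕ, ω ^ n = x)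
    (h2 : 2 ∣ d * f) (j : ℕ) :
    A2x p d f ω ((ω : ZMod p) ^ j) = ((cycNum p d f ω j (theta d f) : ℕ) : ℂ) := by
  have hd0 : 0 < d := by omega
  have hc := ord_c hb hd0
  rw [A2x, key_split hb hd0 hf0 hω (A1x p d f ω) (A1x_inv hc hf0) j, A1x_zero, mul_zero,
    zero_add, Finset.sum_eq_single (theta d f)]
  · rw [show A1x p d f ω ((ω : ZMod p) ^ theta d f) = 1 from ?_, mul_one]
    rw [show A1x p d f ω ((ω : ZMod p) ^ theta d f)
      = ∑ t ∈ Hs p d f ω, (if (ω : ZMod p) ^ theta d f + t = 0 then (1 : ℂ) else 0) from rfl,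
      A1_pow hb hd hf0 h2 (theta_lt hd), if_pos rfl]
  · intro k hk hkθ
    rw [show A1x p d f ω ((ω : ZMod p) ^ k)
      = ∑ t ∈ Hs p d f ω, (if (ω : ZMod p) ^ k + t = 0 then (1 : ℂ) else 0) from rfl,
      A1_pow hb hd hf0 h2 (mem_range.1 hk), if_neg hkθ, mul_zero]
  · intro hθ
    exact absurd (mem_range.2 (theta_lt hd)) hθ

lemma A2x_zero [Fact p.Prime] (hb : orderOf ((ω : ZMod p)) = d * f)
    (hd : 2 ≤ d) (hf0 : 0 < f) (h2 : 2 ∣ d * f) :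
    A2x p d f ω 0 = (f : ℂ) * (if theta d f = 0 then 1 else 0) := by
  have hd0 : 0 < d := by omega
  have hc := ord_c hb hd0
  have h1 : A2x p d f ω 0 = ∑ t ∈ Hs p d f ω, A1x p d f ω t := by
    rw [A2x]
    exact Finset.sum_congr rfl fun t _ => by rw [zero_add]
  have h2' : ∀ t ∈ Hs p d f ω, A1x p d f ω t = A1x p d f ω 1 := by
    intro t ht
    have := A1x_inv hc hf0 t ht 1
    rw [one_mul] at this
    exact this
  rw [h1, Finset.sum_congr rfl h2', Finset.sum_const, Hs_card hc, nsmul_eq_mul]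
  congr 1
  have h3 : A1x p d f ω 1 = A1x p d f ω ((ω : ZMod p) ^ 0) := by rw [pow_zero]
  rw [h3, show A1x p d f ω ((ω : ZMod p) ^ 0)
    = ∑ t ∈ Hs p d f ω, (if (ω : ZMod p) ^ 0 + t = 0 then (1 : ℂ) else 0) from rfl,
    A1_pow hb hd hf0 h2 (by omega : 0 < d)]
  by_cases h0 : theta d f = 0
  · rw [if_pos h0.symm, if_pos h0]
  · rw [if_neg (fun h => h0 h.symm), if_neg h0]

lemma A3x_zero [Fact p.Prime] (hb : orderOf ((ω : ZMod p)) = d * f)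
    (hd : 2 ≤ d) (hf0 : 0 < f) (hω : ∀ x : (ZMod p)ˣ, ∃ n : ℕ, ω ^ n = x) (h2 : 2 ∣ d * f) :
    A3x p d f ω 0 = (f : ℂ) * ((cycNum p d f ω 0 (theta d f) : ℕ) : ℂ) := by
  have hd0 : 0 < d := by omega
  have hc := ord_c hb hd0
  have h1 : A3x p d f ω 0 = ∑ t ∈ Hs p d f ω, A2x p d f ω t := by
    rw [A3x]
    exact Finset.sum_congr rfl fun t _ => by rw [zero_add]
  have h2' : ∀ t ∈ Hs p d f ω, A2x p d f ω t = A2x p d f ω 1 := by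
    intro t ht
    have := A2x_inv hc hf0 t ht 1
    rw [one_mul] at this
    exact this
  rw [h1, Finset.sum_congr rfl h2', Finset.sum_const, Hs_card hc, nsmul_eq_mul]
  congr 1
  have h3 : A2x p d f ω 1 = A2x p d f ω ((ω : ZMod p) ^ 0) := by rw [pow_zero]
  rw [h3, A2x_pow hb hd hf0 hω h2 0]

lemma A3x_pow [Fact p.Prime] (hb : orderOf ((ω : ZMod p)) = d * f)
    (hd : 2 ≤ d) (hf0 : 0 < f) (hω : ∀ x : (ZMod p)ˣ, ∃ n : ℕ, ω ^ n = x)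
    (h2 : 2 ∣ d * f) (i : ℕ) :
    A3x p d f ω ((ω : ZMod p) ^ i)
      = A1x p d f ω ((ω : ZMod p) ^ i) * ((f : ℂ) * (if theta d f = 0 then 1 else 0))
        + ∑ j ∈ Finset.range d, ((cycNum p d f ω i j : ℕ) : ℂ)
            * ((cycNum p d f ω j (theta d f) : ℕ) : ℂ) := by
  have hd0 : 0 < d := by omega
  have hc := ord_c hb hd0
  rw [A3x, key_split hb hd0 hf0 hω (A2x p d f ω) (A2x_inv hc hf0) i,
    A2x_zero hb hd hf0 h2]
  refine congrArg _ (Finset.sum_congr rfl fun j _ => ?_)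
  rw [A2x_pow hb hd hf0 hω h2 j]

lemma E_one [Fact p.Prime] (hb : orderOf ((ω : ZMod p)) = d * f) (hd0 : 0 < d) (hf0 : 0 < f)
    (hω : ∀ x : (ZMod p)ˣ, ∃ n : ℕ, ω ^ n = x) (hplt : 1 < p)
    (hζ : IsPrimitiveRoot ζ p) (ν : ℕ) :
    nInt p d f ω ζ 1 ν + (f : ℂ)
      = (p : ℂ) * ∑ t1 ∈ Hs p d f ω,
          (if (ω : ZMod p) ^ ν + t1 = 0 then (1 : ℂ) else 0) := by
  haveI : NeZero p := ⟨by omega⟩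
  have hc := ord_c hb hd0
  have hζp : ζ ^ p = 1 := hζ.pow_eq_one
  have hmain : nInt p d f ω ζ 1 ν
      = ∑ t1 ∈ Hs p d f ω,
          ((p : ℂ) * (if (ω : ZMod p) ^ ν + t1 = 0 then (1 : ℂ) else 0) - 1) := by
    calc nInt p d f ω ζ 1 ν
        = ∑ i ∈ Finset.range d, ∑ r ∈ Hs p d f ω, ∑ t1 ∈ Hs p d f ω,
            ee p ζ ((ω : ZMod p) ^ i * t1) * ee p ζ ((ω : ZMod p) ^ i * (ω : ZMod p) ^ ν * r) := by
          rw [nInt]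
          refine Finset.sum_congr rfl fun i _ => ?_
          rw [pow_one, gp_eq hc i, gp_eq hc (i + ν)]
          have h1 : ∀ t : ZMod p, (ω : ZMod p) ^ (i + ν) * t
              = (ω : ZMod p) ^ i * (ω : ZMod p) ^ ν * t := by intro t; rw [pow_add]
          simp only [h1]
          exact expand1 (Hs p d f ω) (fun t => ee p ζ ((ω : ZMod p) ^ i * t))
            (fun r => ee p ζ ((ω : ZMod p) ^ i * (ω : ZMod p) ^ ν * r))
      _ = ∑ i ∈ Finset.range d, ∑ r ∈ Hs p d f ω, ∑ t1 ∈ Hs p d f ω,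
            ee p ζ (((ω : ZMod p) ^ i * r) * ((ω : ZMod p) ^ ν + t1)) := by
          refine Finset.sum_congr rfl fun i _ => Finset.sum_congr rfl fun r hr => ?_
          have hsh := (Hs_shift hc hf0 hr (fun t1 =>
            ee p ζ ((ω : ZMod p) ^ i * t1)
              * ee p ζ ((ω : ZMod p) ^ i * (ω : ZMod p) ^ ν * r))).symm
          refine hsh.trans ?_
          refine Finset.sum_congr rfl fun t1 _ => ?_
          rw [← ee_add hζp]
          congr 1
          ring
      _ = ∑ y ∈ Finset.univ.erase (0 : ZMod p), ∑ t1 ∈ Hs p d f ω,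
            ee p ζ (y * ((ω : ZMod p) ^ ν + t1)) :=
          sum_units hb hd0 hf0 hω (fun y => ∑ t1 ∈ Hs p d f ω,
            ee p ζ (y * ((ω : ZMod p) ^ ν + t1)))
      _ = ∑ t1 ∈ Hs p d f ω, ∑ y ∈ Finset.univ.erase (0 : ZMod p),
            ee p ζ (y * ((ω : ZMod p) ^ ν + t1)) :=
          push_in1 _ _ (fun y t1 => ee p ζ (y * ((ω : ZMod p) ^ ν + t1)))
      _ = _ := Finset.sum_congr rfl fun t1 _ => sum_erase_ee hplt hζ _
  rw [hmain]
  simp only [Finset.sum_sub_distrib, ← Finset.mul_sum, Finset.sum_const, Hs_card hc,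
    nsmul_eq_mul, mul_one]
  ring

lemma E_two [Fact p.Prime] (hb : orderOf ((ω : ZMod p)) = d * f) (hd0 : 0 < d) (hf0 : 0 < f)
    (hω : ∀ x : (ZMod p)ˣ, ∃ n : ℕ, ω ^ n = x) (hplt : 1 < p)
    (hζ : IsPrimitiveRoot ζ p) (ν : ℕ) :
    nInt p d f ω ζ 2 ν + (f : ℂ) ^ 2
      = (p : ℂ) * ∑ t1 ∈ Hs p d f ω, ∑ t2 ∈ Hs p d f ω,
          (if (ω : ZMod p) ^ ν + t1 + t2 = 0 then (1 : ℂ) else 0) := by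
  haveI : NeZero p := ⟨by omega⟩
  have hc := ord_c hb hd0
  have hζp : ζ ^ p = 1 := hζ.pow_eq_one
  have hmain : nInt p d f ω ζ 2 ν
      = ∑ t1 ∈ Hs p d f ω, ∑ t2 ∈ Hs p d f ω,
          ((p : ℂ) * (if (ω : ZMod p) ^ ν + t1 + t2 = 0 then (1 : ℂ) else 0) - 1) := by
    calc nInt p d f ω ζ 2 ν
        = ∑ i ∈ Finset.range d, ∑ r ∈ Hs p d f ω, ∑ t1 ∈ Hs p d f ω, ∑ t2 ∈ Hs p d f ω,
            ee p ζ ((ω : ZMod p) ^ i * t2) * (ee p ζ ((ω : ZMod p) ^ i * t1)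
              * ee p ζ ((ω : ZMod p) ^ i * (ω : ZMod p) ^ ν * r)) := by
          rw [nInt]
          refine Finset.sum_congr rfl fun i _ => ?_
          rw [gp_eq hc i, gp_eq hc (i + ν)]
          have h1 : ∀ t : ZMod p, (ω : ZMod p) ^ (i + ν) * t
              = (ω : ZMod p) ^ i * (ω : ZMod p) ^ ν * t := by intro t; rw [pow_add]
          simp only [h1]
          exact expand2 (Hs p d f ω) (fun t => ee p ζ ((ω : ZMod p) ^ i * t))
            (fun r => ee p ζ ((ω : ZMod p) ^ i * (ω : ZMod p) ^ ν * r))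
      _ = ∑ i ∈ Finset.range d, ∑ r ∈ Hs p d f ω, ∑ t1 ∈ Hs p d f ω, ∑ t2 ∈ Hs p d f ω,
            ee p ζ (((ω : ZMod p) ^ i * r) * ((ω : ZMod p) ^ ν + t1 + t2)) := by
          refine Finset.sum_congr rfl fun i _ => Finset.sum_congr rfl fun r hr => ?_
          have hsh := (Hs_shift2 hc hf0 hr (fun t1 t2 =>
            ee p ζ ((ω : ZMod p) ^ i * t2) * (ee p ζ ((ω : ZMod p) ^ i * t1)
              * ee p ζ ((ω : ZMod p) ^ i * (ω : ZMod p) ^ ν * r)))).symm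
          refine hsh.trans ?_
          refine Finset.sum_congr rfl fun t1 _ => Finset.sum_congr rfl fun t2 _ => ?_
          rw [← ee_add hζp, ← ee_add hζp]
          congr 1
          ring
      _ = ∑ y ∈ Finset.univ.erase (0 : ZMod p), ∑ t1 ∈ Hs p d f ω, ∑ t2 ∈ Hs p d f ω,
            ee p ζ (y * ((ω : ZMod p) ^ ν + t1 + t2)) :=
          sum_units hb hd0 hf0 hω (fun y => ∑ t1 ∈ Hs p d f ω, ∑ t2 ∈ Hs p d f ω,
            ee p ζ (y * ((ω : ZMod p) ^ ν + t1 + t2)))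
      _ = ∑ t1 ∈ Hs p d f ω, ∑ t2 ∈ Hs p d f ω, ∑ y ∈ Finset.univ.erase (0 : ZMod p),
            ee p ζ (y * ((ω : ZMod p) ^ ν + t1 + t2)) :=
          push_in2 _ _ (fun y t1 t2 => ee p ζ (y * ((ω : ZMod p) ^ ν + t1 + t2)))
      _ = _ := Finset.sum_congr rfl fun t1 _ => Finset.sum_congr rfl fun t2 _ =>
            sum_erase_ee hplt hζ _
  rw [hmain]
  simp only [Finset.sum_sub_distrib, ← Finset.mul_sum, Finset.sum_const, Hs_card hc,
    nsmul_eq_mul, mul_one]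
  ring

lemma E_four [Fact p.Prime] (hb : orderOf ((ω : ZMod p)) = d * f) (hd0 : 0 < d) (hf0 : 0 < f)
    (hω : ∀ x : (ZMod p)ˣ, ∃ n : ℕ, ω ^ n = x) (hplt : 1 < p)
    (hζ : IsPrimitiveRoot ζ p) (ν : ℕ) :
    nInt p d f ω ζ 4 ν + (f : ℂ) ^ 4
      = (p : ℂ) * ∑ t1 ∈ Hs p d f ω, ∑ t2 ∈ Hs p d f ω, ∑ t3 ∈ Hs p d f ω, ∑ t4 ∈ Hs p d f ω,
          (if (ω : ZMod p) ^ ν + t1 + t2 + t3 + t4 = 0 then (1 : ℂ) else 0) := by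
  haveI : NeZero p := ⟨by omega⟩
  have hc := ord_c hb hd0
  have hζp : ζ ^ p = 1 := hζ.pow_eq_one
  have hmain : nInt p d f ω ζ 4 ν
      = ∑ t1 ∈ Hs p d f ω, ∑ t2 ∈ Hs p d f ω, ∑ t3 ∈ Hs p d f ω, ∑ t4 ∈ Hs p d f ω,
          ((p : ℂ) * (if (ω : ZMod p) ^ ν + t1 + t2 + t3 + t4 = 0 then (1 : ℂ) else 0) - 1) := by
    calc nInt p d f ω ζ 4 ν
        = ∑ i ∈ Finset.range d, ∑ r ∈ Hs p d f ω, ∑ t1 ∈ Hs p d f ω, ∑ t2 ∈ Hs p d f ω,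
            ∑ t3 ∈ Hs p d f ω, ∑ t4 ∈ Hs p d f ω,
            ee p ζ ((ω : ZMod p) ^ i * t4) * (ee p ζ ((ω : ZMod p) ^ i * t3)
              * (ee p ζ ((ω : ZMod p) ^ i * t2) * (ee p ζ ((ω : ZMod p) ^ i * t1)
                * ee p ζ ((ω : ZMod p) ^ i * (ω : ZMod p) ^ ν * r)))) := by
          rw [nInt]
          refine Finset.sum_congr rfl fun i _ => ?_
          rw [gp_eq hc i, gp_eq hc (i + ν)]
          have h1 : ∀ t : ZMod p, (ω : ZMod p) ^ (i + ν) * t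
              = (ω : ZMod p) ^ i * (ω : ZMod p) ^ ν * t := by intro t; rw [pow_add]
          simp only [h1]
          exact expand4 (Hs p d f ω) (fun t => ee p ζ ((ω : ZMod p) ^ i * t))
            (fun r => ee p ζ ((ω : ZMod p) ^ i * (ω : ZMod p) ^ ν * r))
      _ = ∑ i ∈ Finset.range d, ∑ r ∈ Hs p d f ω, ∑ t1 ∈ Hs p d f ω, ∑ t2 ∈ Hs p d f ω,
            ∑ t3 ∈ Hs p d f ω, ∑ t4 ∈ Hs p d f ω,
            ee p ζ (((ω : ZMod p) ^ i * r) * ((ω : ZMod p) ^ ν + t1 + t2 + t3 + t4)) := by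
          refine Finset.sum_congr rfl fun i _ => Finset.sum_congr rfl fun r hr => ?_
          have hsh := (Hs_shift4 hc hf0 hr (fun t1 t2 t3 t4 =>
            ee p ζ ((ω : ZMod p) ^ i * t4) * (ee p ζ ((ω : ZMod p) ^ i * t3)
              * (ee p ζ ((ω : ZMod p) ^ i * t2) * (ee p ζ ((ω : ZMod p) ^ i * t1)
                * ee p ζ ((ω : ZMod p) ^ i * (ω : ZMod p) ^ ν * r)))))).symm
          refine hsh.trans ?_
          refine Finset.sum_congr rfl fun t1 _ => Finset.sum_congr rfl fun t2 _ =>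
            Finset.sum_congr rfl fun t3 _ => Finset.sum_congr rfl fun t4 _ => ?_
          rw [← ee_add hζp, ← ee_add hζp, ← ee_add hζp, ← ee_add hζp]
          congr 1
          ring
      _ = ∑ y ∈ Finset.univ.erase (0 : ZMod p), ∑ t1 ∈ Hs p d f ω, ∑ t2 ∈ Hs p d f ω,
            ∑ t3 ∈ Hs p d f ω, ∑ t4 ∈ Hs p d f ω,
            ee p ζ (y * ((ω : ZMod p) ^ ν + t1 + t2 + t3 + t4)) :=
          sum_units hb hd0 hf0 hω (fun y => ∑ t1 ∈ Hs p d f ω, ∑ t2 ∈ Hs p d f ω,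
            ∑ t3 ∈ Hs p d f ω, ∑ t4 ∈ Hs p d f ω,
            ee p ζ (y * ((ω : ZMod p) ^ ν + t1 + t2 + t3 + t4)))
      _ = ∑ t1 ∈ Hs p d f ω, ∑ t2 ∈ Hs p d f ω, ∑ t3 ∈ Hs p d f ω, ∑ t4 ∈ Hs p d f ω,
            ∑ y ∈ Finset.univ.erase (0 : ZMod p),
            ee p ζ (y * ((ω : ZMod p) ^ ν + t1 + t2 + t3 + t4)) :=
          push_in4 _ _ (fun y t1 t2 t3 t4 =>
            ee p ζ (y * ((ω : ZMod p) ^ ν + t1 + t2 + t3 + t4)))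
      _ = _ := Finset.sum_congr rfl fun t1 _ => Finset.sum_congr rfl fun t2 _ =>
            Finset.sum_congr rfl fun t3 _ => Finset.sum_congr rfl fun t4 _ =>
            sum_erase_ee hplt hζ _
  rw [hmain]
  simp only [Finset.sum_sub_distrib, ← Finset.mul_sum, Finset.sum_const, Hs_card hc,
    nsmul_eq_mul, mul_one]
  ring

end NIntAux

open NIntAux

/-- Lemma 2, case k = 4:
`n(4,ν) + f⁴ = p·Σ_{i,j}(ν,i)(i,j)(j,θ) + f·δ_{θ0}·[n(2,ν)+f²] + f·(0,θ)·[n(1,ν)+f]`. -/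
theorem nInt_four (p d f : ℕ) (hp : p.Prime) (hodd : Odd p)
    (hd : 2 ≤ d) (hdvd : d ∣ p - 1) (hf : f = (p - 1) / d)
    (ω : (ZMod p)ˣ) (hω : ∀ x : (ZMod p)ˣ, ∃ n : ℕ, ω ^ n = x)
    (ζ : ℂ) (hζ : IsPrimitiveRoot ζ p)
    (ν : ℕ) (hν : ν < d) :
    nInt p d f ω ζ 4 ν + (f : ℂ) ^ 4
      = (p : ℂ) * ∑ i ∈ Finset.range d, ∑ j ∈ Finset.range d,
          (cycNum p d f ω ν i : ℂ) * (cycNum p d f ω i j : ℂ)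
            * (cycNum p d f ω j (theta d f) : ℂ)
        + (f : ℂ) * (if theta d f = 0 then 1 else 0) * (nInt p d f ω ζ 2 ν + (f : ℂ) ^ 2)
        + (f : ℂ) * (cycNum p d f ω 0 (theta d f) : ℂ) * (nInt p d f ω ζ 1 ν + (f : ℂ)) := by
  haveI : Fact p.Prime := ⟨hp⟩
  have hplt : 1 < p := hp.one_lt
  have hd0 : 0 < d := by omega
  have hdf : d * f = p - 1 := by rw [hf]; exact Nat.mul_div_cancel' hdvd
  have hp3 : 3 ≤ p := by
    obtain ⟨m, hm⟩ := hodd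
    have := hp.two_le
    omega
  have hf0 : 0 < f := by
    rcases Nat.eq_zero_or_pos f with rfl | h
    · rw [mul_zero] at hdf; omega
    · exact h
  have h2 : 2 ∣ d * f := by
    obtain ⟨m, hm⟩ := hodd
    rw [hdf]
    exact ⟨m, by omega⟩
  have hb : orderOf ((ω : ZMod p)) = d * f := by
    rw [orderOf_units, hdf]
    have hgen : ∀ x : (ZMod p)ˣ, x ∈ Subgroup.zpowers ω := by
      intro x
      obtain ⟨n, hn⟩ := hω x
      exact ⟨(n : ℤ), by simpa using hn⟩
    rw [orderOf_eq_card_of_forall_mem_zpowers hgen, Nat.card_eq_fintype_card, ZMod.card_units]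
  have hc := ord_c hb hd0
  have hE1 := E_one hb hd0 hf0 hω hplt hζ ν
  have hE2 := E_two hb hd0 hf0 hω hplt hζ ν
  have hE4 := E_four hb hd0 hf0 hω hplt hζ ν
  have k4 : ∑ t1 ∈ Hs p d f ω, ∑ t2 ∈ Hs p d f ω, ∑ t3 ∈ Hs p d f ω, ∑ t4 ∈ Hs p d f ω,
      (if (ω : ZMod p) ^ ν + t1 + t2 + t3 + t4 = 0 then (1 : ℂ) else 0)
      = ∑ t ∈ Hs p d f ω, A3x p d f ω ((ω : ZMod p) ^ ν + t) := rfl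
  have k2 : ∑ t1 ∈ Hs p d f ω, ∑ t2 ∈ Hs p d f ω,
      (if (ω : ZMod p) ^ ν + t1 + t2 = 0 then (1 : ℂ) else 0)
      = ∑ t ∈ Hs p d f ω, A1x p d f ω ((ω : ZMod p) ^ ν + t) := rfl
  have k1 : ∑ t1 ∈ Hs p d f ω, (if (ω : ZMod p) ^ ν + t1 = 0 then (1 : ℂ) else 0)
      = A1x p d f ω ((ω : ZMod p) ^ ν) := rfl
  have hs4 := key_split hb hd0 hf0 hω (A3x p d f ω) (A3x_inv hc hf0) ν
  have hs2 := key_split hb hd0 hf0 hω (A1x p d f ω) (A1x_inv hc hf0) ν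
  rw [A1x_zero, mul_zero, zero_add] at hs2
  have hpt : ∀ i ∈ Finset.range d,
      ((cycNum p d f ω ν i : ℕ) : ℂ) * A3x p d f ω ((ω : ZMod p) ^ i)
      = (f : ℂ) * (if theta d f = 0 then 1 else 0)
          * (((cycNum p d f ω ν i : ℕ) : ℂ) * A1x p d f ω ((ω : ZMod p) ^ i))
        + ∑ j ∈ Finset.range d, ((cycNum p d f ω ν i : ℕ) : ℂ)
            * ((cycNum p d f ω i j : ℕ) : ℂ) * ((cycNum p d f ω j (theta d f) : ℕ) : ℂ) := by
    intro i _
    rw [A3x_pow hb hd hf0 hω h2 i, mul_add, Finset.mul_sum]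
    congr 1
    · ring
    · exact Finset.sum_congr rfl fun j _ => by ring
  have hexp : ∑ t1 ∈ Hs p d f ω, ∑ t2 ∈ Hs p d f ω, ∑ t3 ∈ Hs p d f ω, ∑ t4 ∈ Hs p d f ω,
      (if (ω : ZMod p) ^ ν + t1 + t2 + t3 + t4 = 0 then (1 : ℂ) else 0)
      = (f : ℂ) * ((cycNum p d f ω 0 (theta d f) : ℕ) : ℂ)
          * (∑ t1 ∈ Hs p d f ω, (if (ω : ZMod p) ^ ν + t1 = 0 then (1 : ℂ) else 0))
        + (f : ℂ) * (if theta d f = 0 then 1 else 0)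
          * (∑ t1 ∈ Hs p d f ω, ∑ t2 ∈ Hs p d f ω,
              (if (ω : ZMod p) ^ ν + t1 + t2 = 0 then (1 : ℂ) else 0))
        + ∑ i ∈ Finset.range d, ∑ j ∈ Finset.range d,
            ((cycNum p d f ω ν i : ℕ) : ℂ) * ((cycNum p d f ω i j : ℕ) : ℂ)
              * ((cycNum p d f ω j (theta d f) : ℕ) : ℂ) := by
    rw [k4, k2, k1, hs4, A3x_zero hb hd hf0 hω h2, Finset.sum_congr rfl hpt,
      Finset.sum_add_distrib, ← Finset.mul_sum, hs2]
    ring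
  linear_combination hE4 + (p : ℂ) * hexp
    - (f : ℂ) * (if theta d f = 0 then (1:ℂ) else 0) * hE2
    - (f : ℂ) * ((cycNum p d f ω 0 (theta d f) : ℕ) : ℂ) * hE1
end

section
/- (Theorem 1) Let p be an odd prime, d ≥ 2 with d ∣ p−1, f = (p−1)/d. Let a ∈ 𝔽_p^* be a non-d-th-power, with α ≡ ind_ω(a) mod d. Then s_d(p,a) = 2 if (α+θ, θ) ≠ 0, and otherwise s_d(p,a) = min{ s ≥ 3 : there exist 0 ≤ i_2,…,i_{s−1} ≤ d−1 with (α+θ, i_2)·(i_2, i_3)⋯(i_{s−1}, θ) ≠ 0 }. -/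
open Finset

namespace SWA

variable {p d f : ℕ} {ω : (ZMod p)ˣ}

/-- `x` lies in cyclotomic class `i` (mod `d`) w.r.t. generator `ω`. -/
def inC (d : ℕ) (ω : (ZMod p)ˣ) (i : ℕ) (x : (ZMod p)ˣ) : Prop :=
  ∃ k : ℤ, x = ω ^ ((d : ℤ) * k + (i : ℤ))

/-- there exist `x` in class `i`, `y` in class `j` with `1 + x = y`. -/
def stepP (d : ℕ) (ω : (ZMod p)ˣ) (i j : ℕ) : Prop :=
  ∃ x y : (ZMod p)ˣ, inC d ω i x ∧ inC d ω j y ∧ (1 : ZMod p) + (x : ZMod p) = (y : ZMod p)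

theorem inC_mul {i j : ℕ} {x y : (ZMod p)ˣ} (hx : inC d ω i x) (hy : inC d ω j y) :
    inC d ω (i + j) (x * y) := by
  obtain ⟨k, rfl⟩ := hx; obtain ⟨l, rfl⟩ := hy
  refine ⟨k + l, ?_⟩
  rw [← zpow_add]; congr 1; push_cast; ring

theorem inC_congr {i i' : ℕ} {x : (ZMod p)ˣ} (h : i ≡ i' [MOD d]) (hx : inC d ω i x) :
    inC d ω i' x := by
  obtain ⟨k, rfl⟩ := hx
  obtain ⟨t, ht⟩ := h.dvd
  refine ⟨k - t, ?_⟩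
  congr 1; linarith

theorem inC_one : inC d ω 0 (1 : (ZMod p)ˣ) := ⟨0, by simp⟩

theorem inC_inv {x : (ZMod p)ˣ} (hx : inC d ω 0 x) : inC d ω 0 x⁻¹ := by
  obtain ⟨k, rfl⟩ := hx
  exact ⟨-k, by rw [← zpow_neg]; congr 1; push_cast; ring⟩

theorem inC_zero_pow {x : (ZMod p)ˣ} (hx : inC d ω 0 x) :
    ∃ u : (ZMod p)ˣ, x = u ^ d := by
  obtain ⟨k, rfl⟩ := hx
  refine ⟨ω ^ k, ?_⟩
  rw [← zpow_natCast (ω ^ k) d, ← zpow_mul]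
  congr 1; push_cast; ring

theorem pow_inC_zero (hω : ∀ x : (ZMod p)ˣ, ∃ n : ℕ, ω ^ n = x) (u : (ZMod p)ˣ) :
    inC d ω 0 (u ^ d) := by
  obtain ⟨n, rfl⟩ := hω u
  refine ⟨n, ?_⟩
  rw [← pow_mul, ← zpow_natCast ω (n * d)]
  congr 1; push_cast; ring

theorem inC_ratio {i : ℕ} {x y : (ZMod p)ˣ} (hx : inC d ω i x) (hy : inC d ω i y) :
    ∃ c : (ZMod p)ˣ, inC d ω 0 c ∧ x = c * y := by
  obtain ⟨k, rfl⟩ := hx; obtain ⟨l, rfl⟩ := hy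
  refine ⟨ω ^ ((d : ℤ) * (k - l)), ⟨k - l, by norm_num⟩, ?_⟩
  rw [← zpow_add]; congr 1; push_cast; ring

theorem inC_exists (hω : ∀ x : (ZMod p)ˣ, ∃ n : ℕ, ω ^ n = x) (hd : 0 < d)
    (x : (ZMod p)ˣ) : ∃ i < d, inC d ω i x := by
  obtain ⟨n, rfl⟩ := hω x
  refine ⟨n % d, Nat.mod_lt _ hd, ⟨(n / d : ℕ), ?_⟩⟩
  rw [← zpow_natCast ω n]
  congr 1
  exact_mod_cast (Nat.div_add_mod n d).symm

theorem inC_both (horder : orderOf ω = d * f) {i j : ℕ} {x : (ZMod p)ˣ}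
    (hi : inC d ω i x) (hj : inC d ω j x) : (i : ℤ) ≡ (j : ℤ) [ZMOD d] := by
  obtain ⟨k, hk⟩ := hi; obtain ⟨l, hl⟩ := hj
  have h := zpow_eq_zpow_iff_modEq.mp (hk ▸ hl)
  rw [horder] at h
  have hd : ((d : ℤ)) ∣ ((d : ℤ) * l + j) - ((d : ℤ) * k + i) := by
    have h2 := h.dvd
    push_cast at h2 ⊢
    exact dvd_trans ⟨f, by ring⟩ h2
  have hij : ((d : ℤ)) ∣ (j : ℤ) - i := by
    obtain ⟨t, ht⟩ := hd
    exact ⟨t - l + k, by linarith⟩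
  exact Int.modEq_iff_dvd.mpr hij


theorem orderOf_omega (hp : p.Prime) (hdf : d * f = p - 1)
    (hω : ∀ x : (ZMod p)ˣ, ∃ n : ℕ, ω ^ n = x) : orderOf ω = d * f := by
  haveI : Fact p.Prime := ⟨hp⟩
  have h := orderOf_eq_card_of_forall_mem_zpowers (g := ω) (fun x => by
    obtain ⟨n, hn⟩ := hω x
    exact Subgroup.mem_zpowers_iff.mpr ⟨(n : ℤ), by rw [zpow_natCast, hn]⟩)
  rw [h, Nat.card_eq_fintype_card, ZMod.card_units, hdf]

theorem neg_one_eq_pow (hp : p.Prime) (hodd : Odd p) (hdf : d * f = p - 1)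
    (horder : orderOf ω = d * f) : (-1 : (ZMod p)ˣ) = ω ^ (d * f / 2) := by
  haveI : Fact p.Prime := ⟨hp⟩
  have hp3 : 3 ≤ p := by
    rcases hodd with ⟨t, ht⟩
    have := hp.two_le
    omega
  have heven : 2 * (d * f / 2) = d * f := by
    rcases hodd with ⟨t, ht⟩
    omega
  have hsq : (ω ^ (d * f / 2)) ^ 2 = 1 := by
    rw [← pow_mul, mul_comm, heven, ← horder, pow_orderOf_eq_one]
  have hne : ω ^ (d * f / 2) ≠ 1 := by
    intro h1
    have hdvd := orderOf_dvd_of_pow_eq_one h1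
    rw [horder] at hdvd
    have hle := Nat.le_of_dvd (by omega) hdvd
    omega
  have hval : ((ω ^ (d * f / 2) : (ZMod p)ˣ) : ZMod p) = -1 := by
    have h2 : ((ω ^ (d * f / 2) : (ZMod p)ˣ) : ZMod p) * ((ω ^ (d * f / 2) : (ZMod p)ˣ) : ZMod p) = 1 := by
      have := congrArg (Units.val) hsq
      push_cast at this
      rw [sq] at this
      exact this
    rcases mul_self_eq_one_iff.mp h2 with h | h
    · exact absurd (Units.ext h) hne
    · exact h
  refine (Units.ext ?_).symm
  rw [hval]
  simp

theorem theta_decomp (hodd : Odd p) (hdf : d * f = p - 1) :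
    ∃ k₀ : ℕ, d * f / 2 = d * k₀ + theta d f := by
  have hpe : Even (p - 1) := by
    rcases hodd with ⟨t, ht⟩
    exact ⟨t, by omega⟩
  by_cases hf : Even f
  · rcases hf with ⟨t, ht⟩
    have hθ : theta d f = 0 := by unfold theta; exact if_pos ⟨t, ht⟩
    refine ⟨t, ?_⟩
    rw [hθ]
    have h1 : d * f = 2 * (d * t) := by rw [ht]; ring
    omega
  · have hde : Even d := by
      rcases Nat.even_mul.mp (hdf ▸ hpe) with h | h
      · exact h
      · exact absurd h hf
    rcases hde with ⟨e, he⟩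
    have hfo : f % 2 = 1 := Nat.odd_iff.mp (Nat.not_even_iff_odd.mp hf)
    have hθ : theta d f = d / 2 := by unfold theta; exact if_neg hf
    obtain ⟨t, ht2⟩ : ∃ t, f = 2 * t + 1 := ⟨f / 2, by omega⟩
    refine ⟨t, ?_⟩
    rw [hθ]
    have h1 : d * f = 2 * (e * f) := by rw [he]; ring
    have h2 : e * f = 2 * (e * t) + e := by rw [ht2]; ring
    have h3 : d * t = 2 * (e * t) := by rw [he]; ring
    have hd2 : d / 2 = e := by omega
    omega

theorem theta_two_dvd (hodd : Odd p) (hdf : d * f = p - 1) : d ∣ theta d f + theta d f := by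
  by_cases hf : Even f
  · have hθ : theta d f = 0 := by unfold theta; exact if_pos hf
    rw [hθ]
    simp
  · have hpe : Even (p - 1) := by
      rcases hodd with ⟨t, ht⟩
      exact ⟨t, by omega⟩
    have hde : Even d := by
      rcases Nat.even_mul.mp (hdf ▸ hpe) with h | h
      · exact h
      · exact absurd h hf
    have hθ : theta d f = d / 2 := by unfold theta; exact if_neg hf
    rw [hθ]
    rcases hde with ⟨e, he⟩
    exact ⟨1, by omega⟩


theorem neg_inC (hp : p.Prime) (hodd : Odd p) (hdf : d * f = p - 1)
    (horder : orderOf ω = d * f) {i : ℕ} {x : (ZMod p)ˣ} (hx : inC d ω i x) :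
    inC d ω (i + theta d f) (-x) := by
  obtain ⟨k₀, hk₀⟩ := theta_decomp (f := f) hodd hdf
  have hneg := neg_one_eq_pow hp hodd hdf horder
  have h1 : -x = (-1 : (ZMod p)ˣ) * x := (neg_one_mul x).symm
  rw [h1, hneg]
  have h2 : inC d ω (theta d f) (ω ^ (d * f / 2)) := by
    refine ⟨(k₀ : ℤ), ?_⟩
    rw [← zpow_natCast ω (d * f / 2)]
    congr 1
    rw [hk₀]
    push_cast
    ring
  have h3 := inC_mul h2 hx
  exact inC_congr (by rw [Nat.add_comm]) h3

theorem stepP_congr {i i' j j' : ℕ} (hi : i ≡ i' [MOD d]) (hj : j ≡ j' [MOD d])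
    (h : stepP d ω i j) : stepP d ω i' j' := by
  obtain ⟨x, y, hx, hy, hxy⟩ := h
  exact ⟨x, y, inC_congr hi hx, inC_congr hj hy, hxy⟩

theorem modEq_theta2 (hdvd : d ∣ theta d f + theta d f) (i : ℕ) :
    i + theta d f + theta d f ≡ i [MOD d] := by
  have h0 : theta d f + theta d f ≡ 0 [MOD d] := Nat.modEq_zero_iff_dvd.mpr hdvd
  calc i + theta d f + theta d f = i + (theta d f + theta d f) := by ring
  _ ≡ i + 0 [MOD d] := Nat.ModEq.add_left i h0
  _ = i := by ring

theorem stepP_symm (hp : p.Prime) (hodd : Odd p) (hdf : d * f = p - 1)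
    (horder : orderOf ω = d * f) {i j : ℕ} (h : stepP d ω i j) :
    stepP d ω (j + theta d f) (i + theta d f) := by
  obtain ⟨x, y, hx, hy, hxy⟩ := h
  refine ⟨-y, -x, neg_inC hp hodd hdf horder hy, neg_inC hp hodd hdf horder hx, ?_⟩
  push_cast
  linear_combination hxy

/-- reduction of `stepP` indices by `2θ`. -/
theorem stepP_unsymm (hp : p.Prime) (hodd : Odd p) (hdf : d * f = p - 1)
    (horder : orderOf ω = d * f) {i j : ℕ}
    (h : stepP d ω (j + theta d f) (i + theta d f)) : stepP d ω i j := by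
  have h2 := stepP_symm hp hodd hdf horder h
  have hdvd := theta_two_dvd (p := p) hodd hdf
  exact stepP_congr (modEq_theta2 hdvd i) (modEq_theta2 hdvd j) h2

theorem cycNum_finite (i j : ℕ) :
    Finite {uv : ℕ × ℕ // uv.1 < f ∧ uv.2 < f ∧
      (1 : ZMod p) + (ω : ZMod p) ^ (d * uv.1 + i) = (ω : ZMod p) ^ (d * uv.2 + j)} := by
  refine Finite.of_injective
    (fun t => ((⟨t.1.1, t.2.1⟩ : Fin f), (⟨t.1.2, t.2.2.1⟩ : Fin f))) ?_
  rintro ⟨⟨a1, a2⟩, ha⟩ ⟨⟨b1, b2⟩, hb⟩ h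
  simp only [Prod.mk.injEq, Fin.mk.injEq] at h
  simp [Prod.ext_iff, h.1, h.2]

theorem cycNum_ne_zero_iff (hp : p.Prime) (hdf : d * f = p - 1) (hfpos : 0 < f)
    (horder : orderOf ω = d * f) (i j : ℕ) :
    cycNum p d f ω i j ≠ 0 ↔ stepP d ω i j := by
  haveI := cycNum_finite (p := p) (d := d) (f := f) (ω := ω) i j
  unfold cycNum
  rw [Nat.card_ne_zero]
  constructor
  · rintro ⟨⟨⟨⟨u, v⟩, hu, hv, heq⟩⟩, -⟩
    refine ⟨ω ^ (d * u + i), ω ^ (d * v + j), ⟨(u : ℤ), ?_⟩, ⟨(v : ℤ), ?_⟩, ?_⟩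
    · rw [show ((d:ℤ) * (u:ℤ) + (i:ℤ)) = ((d * u + i : ℕ) : ℤ) from by push_cast; ring,
        zpow_natCast]
    · rw [show ((d:ℤ) * (v:ℤ) + (j:ℤ)) = ((d * v + j : ℕ) : ℤ) from by push_cast; ring,
        zpow_natCast]
    · push_cast
      exact heq
  · rintro ⟨x, y, ⟨k, rfl⟩, ⟨l, rfl⟩, hxy⟩
    have hmain : ∀ m : ℤ, ∀ r : ℕ, ∃ u : ℕ, u < f ∧
        (ω : (ZMod p)ˣ) ^ ((d : ℤ) * m + r) = ω ^ (d * u + r) := by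
      intro m r
      refine ⟨(m % f).toNat, ?_, ?_⟩
      · have h1 : 0 ≤ m % f := Int.emod_nonneg m (by exact_mod_cast hfpos.ne')
        have h2 : m % f < f := Int.emod_lt_of_pos m (by exact_mod_cast hfpos)
        omega
      · rw [← zpow_natCast ω (d * (m % f).toNat + r)]
        rw [zpow_eq_zpow_iff_modEq, horder]
        have h1 : 0 ≤ m % f := Int.emod_nonneg m (by exact_mod_cast hfpos.ne')
        have h3 : ((m % f).toNat : ℤ) = m % f := Int.toNat_of_nonneg h1
        rw [Int.modEq_iff_dvd]
        push_cast
        rw [h3]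
        have h4 : m % f = m - f * (m / f) := by rw [Int.emod_def]
        refine ⟨-(m / f), ?_⟩
        rw [h4]
        push_cast
        ring
    obtain ⟨u, hu, hueq⟩ := hmain k i
    obtain ⟨v, hv, hveq⟩ := hmain l j
    refine ⟨⟨⟨(u, v), hu, hv, ?_⟩⟩, inferInstance⟩
    have hxy2 : (1 : ZMod p) + ((ω ^ (d * u + i) : (ZMod p)ˣ) : ZMod p)
        = ((ω ^ (d * v + j) : (ZMod p)ˣ) : ZMod p) := by
      rw [← hueq, ← hveq]
      exact hxy
    push_cast at hxy2
    exact hxy2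


/-- a chain of `ℓ` steps from class `0` up to class `γ`. -/
def Chain (d : ℕ) (ω : (ZMod p)ˣ) : ℕ → ℕ → Prop
  | 0, γ => inC d ω γ 1
  | (ℓ+1), γ => ∃ β, Chain d ω ℓ β ∧ stepP d ω β γ

theorem Chain_zero {γ : ℕ} : Chain d ω 0 γ ↔ inC d ω γ 1 := Iff.rfl

theorem Chain_succ {ℓ γ : ℕ} : Chain d ω (ℓ + 1) γ ↔ ∃ β, Chain d ω ℓ β ∧ stepP d ω β γ :=
  Iff.rfl

/-- if some chain reaches `γ`, every unit in class `γ` is a sum of `ℓ+1` nonzero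
`d`-th powers. -/
theorem chain_sumRep : ∀ ℓ γ (x : (ZMod p)ˣ), Chain d ω ℓ γ → inC d ω γ x →
    ∃ u : Fin (ℓ + 1) → (ZMod p)ˣ, (x : ZMod p) = ∑ i, ((u i : ZMod p)) ^ d := by
  intro ℓ
  induction ℓ with
  | zero =>
    intro γ x hch hx
    obtain ⟨c, hc0, hc⟩ := inC_ratio hx hch
    obtain ⟨u, hu⟩ := inC_zero_pow hc0
    refine ⟨fun _ => u, ?_⟩
    rw [Fin.sum_univ_one]
    rw [hc, hu]
    push_cast
    ring
  | succ ℓ ih =>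
    intro γ x hch hx
    obtain ⟨β, hch', x₀, y₀, hx₀, hy₀, hxy⟩ := Chain_succ.mp hch
    obtain ⟨c, hc0, hc⟩ := inC_ratio hx hy₀
    obtain ⟨w, hw⟩ := inC_zero_pow hc0
    have hcx₀ : inC d ω β (c * x₀) := by
      have := inC_mul hc0 hx₀
      rwa [Nat.zero_add] at this
    obtain ⟨u, hu⟩ := ih β (c * x₀) hch' hcx₀
    refine ⟨Fin.cons w u, ?_⟩
    rw [Fin.sum_univ_succ]
    simp only [Fin.cons_zero, Fin.cons_succ]
    have hx' : (x : ZMod p) = (c : ZMod p) * (y₀ : ZMod p) := by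
      rw [hc]; push_cast; ring
    rw [hx', ← hxy]
    have : ((c * x₀ : (ZMod p)ˣ) : ZMod p) = (c : ZMod p) * (x₀ : ZMod p) := by push_cast; ring
    rw [this] at hu
    rw [← hu]
    have hcw : (c : ZMod p) = (w : ZMod p) ^ d := by rw [hw]; push_cast; ring
    rw [hcw]
    ring

/-- a unit that is a sum of `s` nonzero `d`-th powers admits a chain of length `< s`. -/
theorem sumRep_chain (hp : p.Prime) (hd : 0 < d) (horder : orderOf ω = d * f)
    (hω : ∀ x : (ZMod p)ˣ, ∃ n : ℕ, ω ^ n = x) :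
    ∀ s (x : (ZMod p)ˣ) (u : Fin s → (ZMod p)ˣ),
    (x : ZMod p) = ∑ i, ((u i : ZMod p)) ^ d → ∀ γ, inC d ω γ x →
    ∃ ℓ, ℓ < s ∧ Chain d ω ℓ γ := by
  haveI : Fact p.Prime := ⟨hp⟩
  intro s
  induction s with
  | zero =>
    intro x u hx γ hγ
    rw [Fin.sum_univ_zero] at hx
    exact absurd hx (Units.ne_zero x)
  | succ s ih =>
    intro x u hx γ hγ
    rw [Fin.sum_univ_castSucc] at hx
    set b : ZMod p := ∑ i : Fin s, ((u i.castSucc : ZMod p)) ^ d with hb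
    by_cases hb0 : b = 0
    · -- x is itself a d-th power
      rw [hb0, zero_add] at hx
      have hxu : x = (u (Fin.last s)) ^ d := Units.ext (by push_cast; rw [hx])
      have hx0 : inC d ω 0 x := hxu ▸ pow_inC_zero hω _
      have hγ0 : (γ : ℤ) ≡ (0 : ℤ) [ZMOD d] := by
        have := inC_both horder hγ hx0
        simpa using this
      have hdγ : (d : ℤ) ∣ (γ : ℤ) := Int.modEq_zero_iff_dvd.mp hγ0
      obtain ⟨g', hg'⟩ : d ∣ γ := Int.natCast_dvd_natCast.mp hdγ
      refine ⟨0, Nat.succ_pos s, ?_⟩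
      show inC d ω γ 1
      exact ⟨-(g' : ℤ), by rw [show (d : ℤ) * (-(g' : ℤ)) + γ = 0 by rw [hg']; push_cast; ring, zpow_zero]⟩
    · -- b is a unit
      set bu : (ZMod p)ˣ := Units.mk0 b hb0 with hbu
      obtain ⟨r, hrd, hr⟩ := inC_exists hω hd bu
      obtain ⟨ℓ, hℓ, hchain⟩ := ih bu (fun i => u i.castSucc) (by simp [hbu]; exact hb) r hr
      set c : (ZMod p)ˣ := (u (Fin.last s)) ^ d with hcdef
      have hc0 : inC d ω 0 c := pow_inC_zero hω _
      have hci : inC d ω 0 c⁻¹ := inC_inv hc0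
      have hcv : ((c : (ZMod p)ˣ) : ZMod p) = ((u (Fin.last s) : ZMod p)) ^ d := by
        rw [hcdef]; push_cast; ring
      have hkey : (x : ZMod p) = (bu : ZMod p) + (c : ZMod p) := by
        rw [hcv, hx]
        rfl
      have hstep : stepP d ω r γ := by
        refine ⟨bu * c⁻¹, x * c⁻¹, ?_, ?_, ?_⟩
        · have h5 := inC_mul hr hci
          rwa [Nat.add_zero] at h5
        · have h5 := inC_mul hγ hci
          rwa [Nat.add_zero] at h5
        · rw [Units.val_mul, Units.val_mul, Units.val_inv_eq_inv_val]
          have hcne : ((c : (ZMod p)ˣ) : ZMod p) ≠ 0 := Units.ne_zero c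
          field_simp
          linear_combination -hkey
      have hch2 : Chain d ω (ℓ + 1) γ := Chain_succ.mpr ⟨r, hchain, hstep⟩
      exact ⟨ℓ + 1, by omega, hch2⟩


/-- `Prop`-valued chain along a list. -/
def chainP (P : ℕ → ℕ → Prop) (a b : ℕ) : List ℕ → Prop
  | [] => P a b
  | x :: xs => P a x ∧ chainP P x b xs

theorem chainP_nil {P : ℕ → ℕ → Prop} {a b : ℕ} : chainP P a b [] ↔ P a b := Iff.rfl

theorem chainP_cons {P : ℕ → ℕ → Prop} {a b x : ℕ} {xs : List ℕ} :
    chainP P a b (x :: xs) ↔ P a x ∧ chainP P x b xs := Iff.rfl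

theorem chainProd_ne_zero_iff (c : ℕ → ℕ → ℕ) :
    ∀ (L : List ℕ) (a b : ℕ), chainProd c a b L ≠ 0 ↔ chainP (fun i j => c i j ≠ 0) a b L := by
  intro L
  induction L with
  | nil => intro a b; rfl
  | cons x xs ih =>
    intro a b
    show c a x * chainProd c x b xs ≠ 0 ↔ _
    rw [chainP_cons, ← ih x b, Nat.mul_ne_zero_iff]

theorem chainP_mono {P Q : ℕ → ℕ → Prop} (h : ∀ i j, P i j → Q i j) :
    ∀ (L : List ℕ) (a b : ℕ), chainP P a b L → chainP Q a b L := by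
  intro L
  induction L with
  | nil => intro a b hp; exact h _ _ hp
  | cons x xs ih =>
    intro a b hp
    exact ⟨h _ _ hp.1, ih _ _ hp.2⟩

theorem chainP_congr_head {P : ℕ → ℕ → Prop} {a a' : ℕ} (h : ∀ j, P a j ↔ P a' j) :
    ∀ (L : List ℕ) (b : ℕ), chainP P a b L ↔ chainP P a' b L := by
  intro L b
  cases L with
  | nil => exact h b
  | cons x xs => rw [chainP_cons, chainP_cons, h x]

section withfacts

variable (hp : p.Prime) (hodd : Odd p) (hdf : d * f = p - 1) (horder : orderOf ω = d * f)

include hp hodd hdf horder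

theorem list_to_chain :
    ∀ (L : List ℕ) (γ : ℕ), chainP (stepP d ω) (γ + theta d f) (theta d f) L →
      Chain d ω (L.length + 1) γ := by
  intro L
  induction L with
  | nil =>
    intro γ h
    rw [chainP_nil] at h
    refine Chain_succ.mpr ⟨0, inC_one, stepP_unsymm hp hodd hdf horder ?_⟩
    exact stepP_congr (Nat.ModEq.refl _) (by rw [Nat.zero_add]) h
  | cons x xs ih =>
    intro γ h
    rw [chainP_cons] at h
    obtain ⟨h1, h2⟩ := h
    have hdvd := theta_two_dvd (p := p) (d := d) (f := f) hodd hdf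
    have h2' : chainP (stepP d ω) ((x + theta d f) + theta d f) (theta d f) xs := by
      rw [chainP_congr_head (fun j => ⟨stepP_congr (modEq_theta2 hdvd x) (Nat.ModEq.refl j),
        stepP_congr (modEq_theta2 hdvd x).symm (Nat.ModEq.refl j)⟩) xs (theta d f)]
      exact h2
    have hch := ih (x + theta d f) h2'
    have hstep : stepP d ω (x + theta d f) γ := by
      have h3 := stepP_symm hp hodd hdf horder h1
      exact stepP_congr (Nat.ModEq.refl _) (modEq_theta2 hdvd γ) h3
    exact Chain_succ.mpr ⟨x + theta d f, hch, hstep⟩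

theorem chain_to_list :
    ∀ (ℓ γ : ℕ), Chain d ω (ℓ + 1) γ → 0 < d →
      ∃ L : List ℕ, L.length = ℓ ∧ (∀ x ∈ L, x < d) ∧
        chainP (stepP d ω) (γ + theta d f) (theta d f) L := by
  intro ℓ
  induction ℓ with
  | zero =>
    intro γ h hd
    obtain ⟨β, hβ, hst⟩ := Chain_succ.mp h
    rw [Chain_zero] at hβ
    have hβ0 : β ≡ 0 [MOD d] := by
      have h2 := inC_both horder hβ (inC_one (ω := ω))
      have h3 : (d : ℤ) ∣ (β : ℤ) := Int.modEq_zero_iff_dvd.mp (by simpa using h2)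
      exact Nat.modEq_zero_iff_dvd.mpr (Int.natCast_dvd_natCast.mp h3)
    have hst0 : stepP d ω 0 γ := stepP_congr hβ0 (Nat.ModEq.refl γ) hst
    have hst1 := stepP_symm hp hodd hdf horder hst0
    rw [Nat.zero_add] at hst1
    exact ⟨[], rfl, by simp, chainP_nil.mpr hst1⟩
  | succ m ih =>
    intro γ h hd
    obtain ⟨β, hβ, hst⟩ := Chain_succ.mp h
    obtain ⟨L, hlen, hlt, hcp⟩ := ih β hβ hd
    have hdvd := theta_two_dvd (p := p) (d := d) (f := f) hodd hdf
    refine ⟨((β + theta d f) % d) :: L, by simp [hlen], ?_, ?_⟩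
    · intro x hx
      rcases List.mem_cons.mp hx with h | h
      · rw [h]; exact Nat.mod_lt _ hd
      · exact hlt x h
    · rw [chainP_cons]
      constructor
      · have h3 := stepP_symm hp hodd hdf horder hst
        exact stepP_congr (Nat.ModEq.refl _) (Nat.mod_modEq _ _).symm h3
      · rw [chainP_congr_head (fun j => ⟨stepP_congr (Nat.mod_modEq _ _) (Nat.ModEq.refl j),
          stepP_congr (Nat.mod_modEq _ _).symm (Nat.ModEq.refl j)⟩) L (theta d f)]
        exact hcp

end withfacts


theorem exists_ofFn {d n : ℕ} {L : List ℕ} (hlen : L.length = n) (hlt : ∀ x ∈ L, x < d) :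
    ∃ v : Fin n → Fin d, (List.ofFn fun i => ((v i : ℕ))) = L := by
  subst hlen
  refine ⟨fun i => ⟨L.get i, hlt _ (List.get_mem L i)⟩, ?_⟩
  exact List.ofFn_get L

end SWA

/-- Theorem 1: for a non-`d`-th-power `a` with `α ≡ ind_ω(a) mod d`,
`s_d(p,a) = 2` if `(α+θ,θ) ≠ 0`, and otherwise `s_d(p,a)` is the least `s ≥ 3` for which
some chain `(α+θ,i₂)(i₂,i₃)⋯(i_{s-1},θ)` of cyclotomic numbers is nonzero. -/
theorem sWaring_eq_cyclotomic (p d f : ℕ) (hp : p.Prime) (hodd : Odd p)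
    (hd : 2 ≤ d) (hdvd : d ∣ p - 1) (hf : f = (p - 1) / d)
    (ω : (ZMod p)ˣ) (hω : ∀ x : (ZMod p)ˣ, ∃ n : ℕ, ω ^ n = x)
    (a : (ZMod p)ˣ) (ha : ¬ ∃ b : (ZMod p)ˣ, ((b : ZMod p)) ^ d = (a : ZMod p))
    (α : ℕ) (hα : ∃ m : ℕ, (a : ZMod p) = (ω : ZMod p) ^ (α + d * m)) :
    (cycNum p d f ω (α + theta d f) (theta d f) ≠ 0 → sWaring p d (a : ZMod p) = 2) ∧
    (cycNum p d f ω (α + theta d f) (theta d f) = 0 →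
      sWaring p d (a : ZMod p)
        = sInf {s | 3 ≤ s ∧ ∃ v : Fin (s - 2) → Fin d,
            chainProd (cycNum p d f ω) (α + theta d f) (theta d f)
              (List.ofFn fun i => ((v i : ℕ))) ≠ 0}) := by
  haveI : Fact p.Prime := ⟨hp⟩
  haveI : NeZero p := ⟨hp.pos.ne'⟩
  have hp3 : 3 ≤ p := by
    rcases hodd with ⟨t, ht⟩
    have := hp.two_le
    omega
  have hdf : d * f = p - 1 := by rw [hf]; exact Nat.mul_div_cancel' hdvd
  have hd0 : 0 < d := by omega
  have hfpos : 0 < f := by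
    rcases Nat.eq_zero_or_pos f with h | h
    · rw [h, Nat.mul_zero] at hdf; omega
    · exact h
  have horder : orderOf ω = d * f := SWA.orderOf_omega hp hdf hω
  obtain ⟨m, hm⟩ := hα
  have haunit : a = ω ^ (α + d * m) := Units.ext (by push_cast; exact hm)
  have haC : SWA.inC d ω α a := by
    refine ⟨(m : ℤ), ?_⟩
    rw [haunit, ← zpow_natCast ω (α + d * m)]
    congr 1
    push_cast
    ring
  set T := {k | 1 ≤ k ∧ ∃ u : Fin k → (ZMod p)ˣ, (a : ZMod p) = ∑ i, ((u i : ZMod p)) ^ d}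
    with hT
  have hsw : sWaring p d (a : ZMod p) = sInf T := rfl
  have haNotPow : ∀ u : (ZMod p)ˣ, a ≠ u ^ d := by
    intro u h
    exact ha ⟨u, by rw [h]; push_cast; ring⟩
  have h1T : 1 ∉ T := by
    rintro ⟨-, u, hu⟩
    rw [Fin.sum_univ_one] at hu
    exact haNotPow (u 0) (Units.ext (by push_cast; rw [hu]))
  have hTne : T.Nonempty := by
    refine ⟨(a : ZMod p).val, ?_, fun _ => 1, ?_⟩
    · have h0 : (a : ZMod p) ≠ 0 := Units.ne_zero a
      have h1 := (ZMod.val_eq_zero (a : ZMod p)).not.mpr h0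
      omega
    · show (a : ZMod p) = ∑ _i : Fin (a : ZMod p).val, ((1 : (ZMod p)ˣ) : ZMod p) ^ d
      have hsum : ∑ _i : Fin (a : ZMod p).val, ((1 : (ZMod p)ˣ) : ZMod p) ^ d
          = (((a : ZMod p).val : ℕ) : ZMod p) := by
        simp
      rw [hsum, ZMod.natCast_val, ZMod.cast_id]
  have chainT : ∀ ℓ, SWA.Chain d ω ℓ α → (ℓ + 1) ∈ T := by
    intro ℓ hch
    obtain ⟨u, hu⟩ := SWA.chain_sumRep ℓ α a hch haC
    exact ⟨by omega, u, hu⟩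
  have Tchain : ∀ k ∈ T, ∃ ℓ, ℓ < k ∧ SWA.Chain d ω ℓ α := by
    rintro k ⟨-, u, hu⟩
    exact SWA.sumRep_chain hp hd0 horder hω k a u hu α haC
  have hnc0 : ¬ SWA.Chain d ω 0 α := by
    intro h
    rw [SWA.Chain_zero] at h
    obtain ⟨c, hc0, hc⟩ := SWA.inC_ratio haC h
    obtain ⟨u, hu⟩ := SWA.inC_zero_pow hc0
    exact haNotPow u (by rw [hc, hu, mul_one])
  have hcyc_iff : cycNum p d f ω (α + theta d f) (theta d f) ≠ 0 ↔ SWA.Chain d ω 1 α := by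
    rw [SWA.cycNum_ne_zero_iff hp hdf hfpos horder]
    constructor
    · intro h
      have h2 : SWA.chainP (SWA.stepP d ω) (α + theta d f) (theta d f) [] :=
        SWA.chainP_nil.mpr h
      exact SWA.list_to_chain hp hodd hdf horder [] α h2
    · intro h
      obtain ⟨L, hlen, -, hcp⟩ := SWA.chain_to_list hp hodd hdf horder 0 α h hd0
      have hL : L = [] := List.length_eq_zero_iff.mp hlen
      rw [hL] at hcp
      exact SWA.chainP_nil.mp hcp
  constructor
  · intro hC
    have hch1 : SWA.Chain d ω 1 α := hcyc_iff.mp hC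
    have h2T : 2 ∈ T := chainT 1 hch1
    rw [hsw]
    have hle : sInf T ≤ 2 := Nat.sInf_le h2T
    have hmem := Nat.sInf_mem hTne
    have hge1 : 1 ≤ sInf T := hmem.1
    have hne1 : sInf T ≠ 1 := fun h => h1T (h ▸ Nat.sInf_mem hTne)
    omega
  · intro hC0
    have hnc1 : ¬ SWA.Chain d ω 1 α := fun h => (hcyc_iff.mpr h) hC0
    set S := {s | 3 ≤ s ∧ ∃ v : Fin (s - 2) → Fin d,
        chainProd (cycNum p d f ω) (α + theta d f) (theta d f)
          (List.ofFn fun i => ((v i : ℕ))) ≠ 0} with hS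
    have hST : ∀ s ∈ S, s ∈ T := by
      rintro s ⟨hs3, v, hv⟩
      have hcp := SWA.chainP_mono
        (fun i j h => (SWA.cycNum_ne_zero_iff hp hdf hfpos horder i j).mp h) _ _ _
        ((SWA.chainProd_ne_zero_iff _ _ _ _).mp hv)
      have hch := SWA.list_to_chain hp hodd hdf horder _ α hcp
      have hlen : (List.ofFn fun i => ((v i : ℕ))).length = s - 2 := by simp
      rw [hlen] at hch
      have hmem := chainT _ hch
      rw [show s - 2 + 1 + 1 = s by omega] at hmem
      exact hmem
    have hs0 := Nat.sInf_mem hTne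
    obtain ⟨ℓ, hℓlt, hch⟩ := Tchain _ hs0
    have hℓ2 : 2 ≤ ℓ := by
      by_contra hcon
      rcases (by omega : ℓ = 0 ∨ ℓ = 1) with h | h
      · exact hnc0 (h ▸ hch)
      · exact hnc1 (h ▸ hch)
    obtain ⟨n, rfl⟩ : ∃ n, ℓ = n + 1 := ⟨ℓ - 1, by omega⟩
    obtain ⟨L, hlen, hLlt, hcp⟩ := SWA.chain_to_list hp hodd hdf horder n α hch hd0
    have hlen' : L.length = n + 2 - 2 := by omega
    obtain ⟨v, hv⟩ := SWA.exists_ofFn hlen' hLlt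
    have hmemS : (n + 2) ∈ S := by
      refine ⟨by omega, v, ?_⟩
      rw [hv]
      exact (SWA.chainProd_ne_zero_iff _ _ _ _).mpr (SWA.chainP_mono
        (fun i j h => (SWA.cycNum_ne_zero_iff hp hdf hfpos horder i j).mpr h) _ _ _ hcp)
    rw [hsw]
    have hSne : S.Nonempty := ⟨n + 2, hmemS⟩
    have h1 : sInf S ∈ S := Nat.sInf_mem hSne
    have h2 : sInf S ∈ T := hST _ h1
    have h3 : sInf T ≤ sInf S := Nat.sInf_le h2
    have h4 : sInf S ≤ n + 2 := Nat.sInf_le hmemS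
    omega
end

section
/- (Theorem 2) Let p be an odd prime, d ≥ 2 with d ∣ p−1, f = (p−1)/d. Define the d×d matrix M = (m_{ij})_{0 ≤ i,j ≤ d−1} over ℕ by m_{ij} = 0 if (i,j) = 0 and m_{ij} = 1 otherwise, and write (m_{ij}^{(n)}) = M^n. Then g_d(p) = max_{0 ≤ α ≤ d−1} min{ s ≥ 1 : m_{(α+θ)θ}^{(s−1)} ≠ 0 }, where the row index α+θ is taken mod d. -/
open Finset

/- ===== auxiliary development ===== -/

/-- `a` lies in the coset `C_i = ω^i (𝔽_p^*)^d`. -/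
def InC (p d : ℕ) (ω : (ZMod p)ˣ) (i : ZMod d) (a : ZMod p) : Prop :=
  ∃ n : ℕ, a = (ω : ZMod p) ^ n ∧ (n : ZMod d) = i

/-- `1 + C_i` meets `C_j`. -/
def Solv (p d : ℕ) (ω : (ZMod p)ˣ) (i j : ZMod d) : Prop :=
  ∃ g h : ZMod p, InC p d ω i g ∧ InC p d ω j h ∧ 1 + g = h

/-- `a` is a sum of `k` nonzero `d`-th powers. -/
def Sof (p d k : ℕ) (a : ZMod p) : Prop :=
  ∃ u : Fin k → (ZMod p)ˣ, a = ∑ i, ((u i : ZMod p)) ^ d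

/-- There is a chain of length `s` from `i` to `j` through `Solv`-steps. -/
def PathProp (p d : ℕ) (ω : (ZMod p)ˣ) : ℕ → ZMod d → ZMod d → Prop
  | 0, i, j => i = j
  | s+1, i, j => ∃ k, Solv p d ω i k ∧ PathProp p d ω s k j

section AuxAll
variable {p d f : ℕ} {ω : (ZMod p)ˣ}

lemma ord_of_gen (hp : p.Prime) (hω : ∀ x : (ZMod p)ˣ, ∃ n : ℕ, ω ^ n = x) :
    orderOf ω = p - 1 := by
  haveI : Fact p.Prime := ⟨hp⟩
  have h1 : orderOf ω = Nat.card (ZMod p)ˣ :=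
    orderOf_eq_card_of_forall_mem_zpowers (fun x => by
      obtain ⟨n, hn⟩ := hω x
      exact ⟨(n : ℤ), by simpa using hn⟩)
  rw [h1, Nat.card_eq_fintype_card, ZMod.card_units_eq_totient, Nat.totient_prime hp]

lemma pow_eq_pow_iff' (hord : orderOf ω = p - 1) {a b : ℕ} :
    (ω : ZMod p) ^ a = (ω : ZMod p) ^ b ↔ a ≡ b [MOD p - 1] := by
  rw [← hord, ← pow_eq_pow_iff_modEq]
  constructor
  · intro h; exact Units.ext (by push_cast; simpa using h)
  · intro h; exact_mod_cast congrArg (Units.val) h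

lemma inC_ne_zero (hp : p.Prime) {i : ZMod d} {a : ZMod p} (h : InC p d ω i a) : a ≠ 0 := by
  haveI : Fact p.Prime := ⟨hp⟩
  obtain ⟨n, rfl, -⟩ := h
  have : ((ω ^ n : (ZMod p)ˣ) : ZMod p) ≠ 0 := Units.ne_zero _
  simpa using this

lemma inC_mul {i j : ZMod d} {a b : ZMod p} (ha : InC p d ω i a) (hb : InC p d ω j b) :
    InC p d ω (i + j) (a * b) := by
  obtain ⟨n, rfl, hn⟩ := ha; obtain ⟨m, rfl, hm⟩ := hb
  exact ⟨n + m, by rw [pow_add], by push_cast [hn, hm]; ring⟩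

lemma inC_inv (hp : p.Prime) (hdvd : d ∣ p - 1) (hord : orderOf ω = p - 1)
    {i : ZMod d} {a : ZMod p} (ha : InC p d ω i a) : InC p d ω (-i) a⁻¹ := by
  haveI : Fact p.Prime := ⟨hp⟩
  obtain ⟨n, rfl, hn⟩ := ha
  have hp2 : 2 ≤ p := hp.two_le
  refine ⟨n * (p - 2), ?_, ?_⟩
  · have h1 : (ω : ZMod p) ^ n * (ω : ZMod p) ^ (n * (p - 2)) = 1 := by
      rw [← pow_add]
      have : n + n * (p - 2) = n * (p - 1) := by
        have : p - 1 = (p - 2) + 1 := by omega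
        rw [this]; ring
      rw [this, mul_comm n (p-1), pow_mul]
      have h0 : (ω : ZMod p) ^ (p - 1) = 1 := by
        have := pow_orderOf_eq_one ω
        rw [hord] at this
        simpa using congrArg (Units.val) this
      rw [h0, one_pow]
    exact inv_eq_of_mul_eq_one_right h1
  · have hpd : ((p - 1 : ℕ) : ZMod d) = 0 := by
      obtain ⟨k, hk⟩ := hdvd
      simp [hk]
    have h2 : ((p - 2 : ℕ) : ZMod d) = -1 := by
      have : (p - 2) + 1 = p - 1 := by omega
      have := congrArg (fun x : ℕ => (x : ZMod d)) this
      push_cast at this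
      rw [hpd] at this
      exact eq_neg_of_add_eq_zero_left this
    push_cast [h2, hn]
    ring

lemma pow_p1 (hord : orderOf ω = p - 1) : (ω : ZMod p) ^ (p - 1) = 1 := by
  have := pow_orderOf_eq_one ω
  rw [hord] at this
  simpa using congrArg (Units.val) this

lemma pow_half_eq_neg_one (hp : p.Prime) (hodd : Odd p) (hord : orderOf ω = p - 1) :
    (ω : ZMod p) ^ ((p - 1) / 2) = -1 := by
  haveI : Fact p.Prime := ⟨hp⟩
  have hp3 : 3 ≤ p := by
    rcases hodd with ⟨k, hk⟩
    have := hp.two_le; omega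
  set y : ZMod p := (ω : ZMod p) ^ ((p - 1) / 2) with hy
  have hsq : y * y = 1 := by
    rw [hy, ← pow_add]
    have h6 : (p - 1) / 2 + (p - 1) / 2 = p - 1 := by
      rcases hodd with ⟨k, hk⟩; omega
    rw [h6, pow_p1 hord]
  have hne : y ≠ 1 := by
    intro h
    have h2 : (ω : ZMod p) ^ ((p - 1) / 2) = (ω : ZMod p) ^ 0 := by simpa [hy] using h
    have h3 : (ω ^ ((p - 1) / 2) : (ZMod p)ˣ) = ω ^ 0 := Units.ext (by push_cast; simpa using h2)
    have h4 := (pow_eq_pow_iff_modEq.mp h3)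
    rw [hord] at h4
    have h5 : ((p-1)/2) % (p - 1) = 0 % (p - 1) := h4
    rw [Nat.zero_mod, Nat.mod_eq_of_lt (by omega)] at h5
    omega
  rcases mul_self_eq_one_iff.mp hsq with h | h
  · exact absurd h hne
  · exact h

lemma d_even_of_f_odd (hodd : Odd p) (hfd : d * f = p - 1) (hf : ¬ Even f) : Even d := by
  rcases Nat.even_or_odd d with h | h
  · exact h
  · exfalso
    rw [Nat.not_even_iff_odd] at hf
    have hdf : Odd (d * f) := h.mul hf
    rw [hfd] at hdf
    rcases hodd with ⟨k, hk⟩; rcases hdf with ⟨j, hj⟩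
    omega

lemma theta_decomp (hodd : Odd p) (hfd : d * f = p - 1) :
    ∃ m, (p - 1) / 2 = d * m + theta d f := by
  unfold theta
  by_cases hf : Even f
  · obtain ⟨m, hm⟩ := hf
    have h7 : p - 1 = d * m + d * m := by rw [← hfd, hm]; ring
    exact ⟨m, by rw [if_pos ⟨m, hm⟩]; omega⟩
  · obtain ⟨e, he⟩ := d_even_of_f_odd hodd hfd hf
    rw [Nat.not_even_iff_odd] at hf
    obtain ⟨m, hm⟩ := hf
    have h7 : p - 1 = d * m + d * m + e + e := by rw [← hfd, hm, he]; ring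
    have h8 : d / 2 = e := by omega
    refine ⟨m, ?_⟩
    rw [if_neg (by rw [Nat.not_even_iff_odd]; exact ⟨m, hm⟩), h8]
    omega

lemma exists_exponent (hd : 2 ≤ d) (hdvd : d ∣ p - 1) (hf1 : 1 ≤ f) (hfd : d * f = p - 1)
    (hord : orderOf ω = p - 1) {i : ℕ} {g : ZMod p}
    (hg : InC p d ω (i : ZMod d) g) : ∃ u, u < f ∧ g = (ω : ZMod p) ^ (d * u + i) := by
  obtain ⟨n, rfl, hn⟩ := hg
  have hp1 : 1 ≤ p - 1 := by
    have : 1 ≤ d * f := Nat.mul_pos (by omega) hf1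
    omega
  have hni : n ≡ i [MOD d] := (ZMod.natCast_eq_natCast_iff n i d).mp hn
  set N := n + i * (p - 1) with hNdef
  have hNn : N ≡ n [MOD p - 1] := by
    have : N % (p - 1) = n % (p - 1) := by
      simp [hNdef, Nat.add_mul_mod_self_right, Nat.mul_mod_right,
        Nat.mul_mod, Nat.mod_self]
    exact this
  have hNi : N ≡ i [MOD d] := by
    have h0 : i * (p - 1) ≡ 0 [MOD d] :=
      (Nat.modEq_zero_iff_dvd).mpr (Dvd.dvd.mul_left hdvd i)
    calc N = n + i * (p - 1) := rfl
      _ ≡ n + 0 [MOD d] := Nat.ModEq.add_left n h0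
      _ = n := by omega
      _ ≡ i [MOD d] := hni
  have hNgei : i ≤ N := by
    have : i * 1 ≤ i * (p - 1) := Nat.mul_le_mul_left i hp1
    omega
  obtain ⟨k, hk⟩ := (Nat.modEq_iff_dvd' hNgei).mp hNi.symm
  have hN : N = d * k + i := by omega
  set u := k % f with hu
  set q := k / f with hq
  have hk2 : k = f * q + u := (Nat.div_add_mod k f).symm
  have hulf : u < f := Nat.mod_lt _ (by omega)
  have hNu : N = (d * u + i) + (d * f) * q := by rw [hN, hk2]; ring
  refine ⟨u, hulf, ?_⟩
  rw [pow_eq_pow_iff' hord]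
  have : n % (p - 1) = (d * u + i) % (p - 1) := by
    have h1 : N % (p - 1) = (d * u + i) % (p - 1) := by
      rw [hNu, hfd, Nat.add_mul_mod_self_left]
    have h2 := hNn
    unfold Nat.ModEq at h2
    omega
  exact this

lemma cycNum_finite (p d f : ℕ) (ω : (ZMod p)ˣ) (i j : ℕ) :
    Finite {uv : ℕ × ℕ // uv.1 < f ∧ uv.2 < f ∧
      (1 : ZMod p) + (ω : ZMod p) ^ (d * uv.1 + i) = (ω : ZMod p) ^ (d * uv.2 + j)} := by
  apply Finite.of_injective
    (fun x => ((⟨x.1.1, x.2.1⟩ : Fin f), (⟨x.1.2, x.2.2.1⟩ : Fin f)))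
  intro a b hab
  apply Subtype.ext
  have h1 := congrArg (fun y : Fin f × Fin f => (y.1 : ℕ)) hab
  have h2 := congrArg (fun y : Fin f × Fin f => (y.2 : ℕ)) hab
  exact Prod.ext h1 h2

lemma cycNum_ne_zero_iff (hd : 2 ≤ d) (hdvd : d ∣ p - 1) (hf1 : 1 ≤ f)
    (hfd : d * f = p - 1) (hord : orderOf ω = p - 1) (i j : ℕ) :
    cycNum p d f ω i j ≠ 0 ↔ Solv p d ω (i : ZMod d) (j : ZMod d) := by
  unfold cycNum
  rw [Nat.card_ne_zero]
  constructor
  · rintro ⟨⟨⟨⟨u, v⟩, hu, hv, heq⟩⟩, -⟩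
    refine ⟨(ω : ZMod p) ^ (d * u + i), (ω : ZMod p) ^ (d * v + j),
      ⟨d * u + i, rfl, by push_cast; simp⟩, ⟨d * v + j, rfl, by push_cast; simp⟩, heq⟩
  · rintro ⟨g, h, hg, hh, heq⟩
    obtain ⟨u, hu, rfl⟩ := exists_exponent hd hdvd hf1 hfd hord hg
    obtain ⟨v, hv, rfl⟩ := exists_exponent hd hdvd hf1 hfd hord hh
    exact ⟨⟨⟨(u, v), hu, hv, heq⟩⟩, cycNum_finite p d f ω i j⟩

lemma inC_rep (hd : 2 ≤ d) (i : ZMod d) : InC p d ω i ((ω : ZMod p) ^ (@ZMod.val d i)) := by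
  haveI : NeZero d := ⟨by omega⟩
  exact ⟨i.val, rfl, ZMod.natCast_rightInverse i⟩

lemma inC_ratio (hp : p.Prime) (hdvd : d ∣ p - 1) (hord : orderOf ω = p - 1)
    {i : ZMod d} {a a' : ZMod p} (ha : InC p d ω i a) (ha' : InC p d ω i a') :
    ∃ t : ZMod p, InC p d ω 0 t ∧ a = a' * t := by
  haveI : Fact p.Prime := ⟨hp⟩
  refine ⟨a * a'⁻¹, ?_, ?_⟩
  · have := inC_mul ha (inC_inv hp hdvd hord ha')
    simpa using this
  · field_simp [inC_ne_zero hp ha']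

lemma solv_shift (hp : p.Prime) (hd : 2 ≤ d) (hdvd : d ∣ p - 1)
    (hord : orderOf ω = p - 1) {t : ZMod d} (ht : InC p d ω t (-1)) (α β : ZMod d) :
    Solv p d ω (α + t) (β + t) ↔
      ∃ x b : ZMod p, InC p d ω 0 x ∧ InC p d ω β b ∧ InC p d ω α (x + b) := by
  haveI : Fact p.Prime := ⟨hp⟩
  constructor
  · rintro ⟨g, h, hg, hh, heq⟩
    have hhne : h ≠ 0 := inC_ne_zero hp hh
    set b : ZMod p := (ω : ZMod p) ^ (@ZMod.val d β) with hbdef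
    have hb : InC p d ω β b := inC_rep hd β
    have hbne : b ≠ 0 := inC_ne_zero hp hb
    refine ⟨(-h⁻¹) * b, b, ?_, hb, ?_⟩
    · have hc : InC p d ω (t + -(β + t)) (-1 * h⁻¹) :=
        inC_mul ht (inC_inv hp hdvd hord hh)
      have := inC_mul hc hb
      rw [show t + -(β + t) + β = (0 : ZMod d) by ring] at this
      simpa using this
    · have halg : (-h⁻¹) * b + b = b * (g * h⁻¹) := by
        have h1 : g = h - 1 := by linear_combination heq
        field_simp [h1]
        linear_combination -h1
      rw [halg]
      have := inC_mul (inC_mul hb hg) (inC_inv hp hdvd hord hh)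
      rw [show β + (α + t) + -(β + t) = α by ring] at this
      rwa [mul_assoc] at this
  · rintro ⟨x, b, hx, hb, hab⟩
    have hxne : x ≠ 0 := inC_ne_zero hp hx
    refine ⟨(-(x + b)) * x⁻¹, (-b) * x⁻¹, ?_, ?_, ?_⟩
    · have hneg : InC p d ω (t + α) (-(x+b)) := by
        have := inC_mul ht hab
        simpa using this
      have := inC_mul hneg (inC_inv hp hdvd hord hx)
      rw [show t + α + -0 = α + t by ring] at this
      exact this
    · have hneg : InC p d ω (t + β) (-b) := by
        have := inC_mul ht hb
        simpa using this
      have := inC_mul hneg (inC_inv hp hdvd hord hx)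
      rw [show t + β + -0 = β + t by ring] at this
      exact this
    · field_simp
      ring

lemma inC_unique (hdvd : d ∣ p - 1) (hord : orderOf ω = p - 1) {i j : ZMod d} {a : ZMod p}
    (ha : InC p d ω i a) (hb : InC p d ω j a) : i = j := by
  obtain ⟨n, rfl, hn⟩ := ha
  obtain ⟨m, hm, hmj⟩ := hb
  have h1 : (ω ^ n : (ZMod p)ˣ) = ω ^ m := Units.ext (by push_cast; simpa using hm)
  have h2 : n ≡ m [MOD d] :=
    Nat.ModEq.of_dvd hdvd (by rw [← hord]; exact pow_eq_pow_iff_modEq.mp h1)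
  rw [← hn, ← hmj]
  exact (ZMod.natCast_eq_natCast_iff n m d).mpr h2

lemma inC_pow_d (hω : ∀ x : (ZMod p)ˣ, ∃ n : ℕ, ω ^ n = x) (c : (ZMod p)ˣ) :
    InC p d ω 0 (((c : ZMod p)) ^ d) := by
  obtain ⟨n, hn⟩ := hω c
  refine ⟨n * d, ?_, by push_cast; simp⟩
  rw [← hn]; push_cast [pow_mul]; ring

lemma inC0_eq_pow (hd : 2 ≤ d) {x : ZMod p} (hx : InC p d ω 0 x) :
    ∃ c : (ZMod p)ˣ, x = ((c : ZMod p)) ^ d := by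
  haveI : NeZero d := ⟨by omega⟩
  obtain ⟨n, rfl, hn⟩ := hx
  have hdn : d ∣ n := (ZMod.natCast_eq_zero_iff n d).mp hn
  obtain ⟨m, rfl⟩ := hdn
  exact ⟨ω ^ m, by push_cast [pow_mul]; ring⟩

lemma sof_cons {k : ℕ} (c : (ZMod p)ˣ) {b : ZMod p} (hb : Sof p d k b) :
    Sof p d (k + 1) (((c : ZMod p)) ^ d + b) := by
  obtain ⟨u, rfl⟩ := hb
  exact ⟨Fin.cons c u, by rw [Fin.sum_univ_succ]; simp⟩

lemma lemB (hp : p.Prime) (hd : 2 ≤ d) (hdvd : d ∣ p - 1) (hord : orderOf ω = p - 1)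
    {t : ZMod d} (ht : InC p d ω t (-1)) :
    ∀ s (α : ZMod d) (a : ZMod p), PathProp p d ω s (α + t) t → InC p d ω α a →
      Sof p d (s + 1) a := by
  intro s
  induction s with
  | zero =>
    intro α a hpath ha
    have hα : α = 0 := by
      have h9 : α + t = t := hpath
      have := add_right_cancel (b := t) (a := α) (c := 0) (by simpa using h9)
      simpa using this
    rw [hα] at ha
    obtain ⟨c, rfl⟩ := inC0_eq_pow hd ha
    exact ⟨fun _ => c, by simp⟩
  | succ s ih =>
    intro α a hpath ha
    obtain ⟨k, hsolv, hrest⟩ := hpath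
    set β := k - t with hβ
    have hk : k = β + t := by rw [hβ]; ring
    rw [hk] at hsolv hrest
    obtain ⟨x, b, hx, hb, hab⟩ := (solv_shift hp hd hdvd hord ht α β).mp hsolv
    obtain ⟨r, hr, har⟩ := inC_ratio hp hdvd hord ha hab
    have hxr : InC p d ω 0 (x * r) := by simpa using inC_mul hx hr
    have hbr : InC p d ω β (b * r) := by simpa using inC_mul hb hr
    have hsb : Sof p d (s + 1) (b * r) := ih β (b * r) hrest hbr
    obtain ⟨c, hc⟩ := inC0_eq_pow hd hxr
    have h10 := sof_cons c hsb
    rw [← hc] at h10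
    have haeq : a = x * r + b * r := by rw [har]; ring
    rwa [← haeq] at h10

lemma lemF (hp : p.Prime) (hd : 2 ≤ d) (hdvd : d ∣ p - 1) (hord : orderOf ω = p - 1)
    (hω : ∀ x : (ZMod p)ˣ, ∃ n : ℕ, ω ^ n = x) {t : ZMod d} (ht : InC p d ω t (-1)) :
    ∀ k (α : ZMod d) (a : ZMod p), InC p d ω α a → Sof p d k a →
      ∃ s, s + 1 ≤ k ∧ PathProp p d ω s (α + t) t := by
  intro k
  induction k using Nat.strong_induction_on with
  | _ k ih =>
    intro α a ha hsof
    match k, hsof with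
    | 0, ⟨u, hu⟩ =>
      exfalso
      exact inC_ne_zero hp ha (by simpa using hu)
    | (k' + 1), ⟨u, hu⟩ =>
      set b : ZMod p := ∑ i : Fin k', ((u i.succ : ZMod p)) ^ d with hbdef
      have hadec : a = ((u 0 : ZMod p)) ^ d + b := by
        rw [hu, Fin.sum_univ_succ]
      by_cases hb0 : b = 0
      · have hα : α = 0 := inC_unique hdvd hord ha
          (by rw [hadec, hb0, add_zero]; exact inC_pow_d hω (u 0))
        refine ⟨0, by omega, ?_⟩
        show (α + t) = t
        rw [hα, zero_add]
      · haveI : Fact p.Prime := ⟨hp⟩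
        obtain ⟨n, hn⟩ := hω (Units.mk0 b hb0)
        have hbC : InC p d ω (n : ZMod d) b := by
          refine ⟨n, ?_, rfl⟩
          have := congrArg (Units.val) hn
          push_cast at this
          simp [this]
        have hsofb : Sof p d k' b := ⟨fun i => u i.succ, rfl⟩
        obtain ⟨s, hs, hpath⟩ := ih k' (by omega) _ b hbC hsofb
        have hsolv : Solv p d ω (α + t) ((n : ZMod d) + t) := by
          rw [solv_shift hp hd hdvd hord ht]
          exact ⟨((u 0 : ZMod p)) ^ d, b, inC_pow_d hω (u 0), hbC, by rw [← hadec]; exact ha⟩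
        exact ⟨s + 1, by omega, ⟨(n : ZMod d) + t, hsolv, hpath⟩⟩

def idx (hd : 2 ≤ d) (x : ZMod d) : Fin d :=
  ⟨@ZMod.val d x, @ZMod.val_lt d ⟨by omega⟩ x⟩

lemma idx_inj (hd : 2 ≤ d) {x y : ZMod d} (h : idx hd x = idx hd y) : x = y := by
  haveI : NeZero d := ⟨by omega⟩
  have := congrArg (fun z : Fin d => (z : ℕ)) h
  exact ZMod.val_injective d this

lemma idx_surj (hd : 2 ≤ d) (k : Fin d) : idx hd (((k : ℕ) : ZMod d)) = k := by
  haveI : NeZero d := ⟨by omega⟩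
  apply Fin.ext
  show (((k : ℕ) : ZMod d)).val = (k : ℕ)
  rw [ZMod.val_natCast, Nat.mod_eq_of_lt k.isLt]

lemma idx_cast (hd : 2 ≤ d) (x : ZMod d) : (((idx hd x : ℕ)) : ZMod d) = x := by
  haveI : NeZero d := ⟨by omega⟩
  exact ZMod.natCast_rightInverse x

lemma matrix_entry_iff (hd : 2 ≤ d) (hdvd : d ∣ p - 1) (hf1 : 1 ≤ f) (hfd : d * f = p - 1)
    (hord : orderOf ω = p - 1) (M : Matrix (Fin d) (Fin d) ℕ)
    (hM : ∀ i j : Fin d, M i j = if cycNum p d f ω (i : ℕ) (j : ℕ) = 0 then 0 else 1)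
    (x y : ZMod d) : M (idx hd x) (idx hd y) ≠ 0 ↔ Solv p d ω x y := by
  rw [hM]
  have h1 := cycNum_ne_zero_iff (f := f) hd hdvd hf1 hfd hord ((idx hd x : ℕ)) ((idx hd y : ℕ))
  rw [idx_cast, idx_cast] at h1
  rw [← h1]
  by_cases h : cycNum p d f ω ((idx hd x : ℕ)) ((idx hd y : ℕ)) = 0 <;> simp [h]

lemma pathProp_iff_matrix (hd : 2 ≤ d) (hdvd : d ∣ p - 1) (hf1 : 1 ≤ f) (hfd : d * f = p - 1)
    (hord : orderOf ω = p - 1) (M : Matrix (Fin d) (Fin d) ℕ)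
    (hM : ∀ i j : Fin d, M i j = if cycNum p d f ω (i : ℕ) (j : ℕ) = 0 then 0 else 1) :
    ∀ s (x y : ZMod d), (M ^ s) (idx hd x) (idx hd y) ≠ 0 ↔ PathProp p d ω s x y := by
  intro s
  induction s with
  | zero =>
    intro x y
    rw [pow_zero]
    show (1 : Matrix (Fin d) (Fin d) ℕ) _ _ ≠ 0 ↔ x = y
    rw [Matrix.one_apply]
    constructor
    · intro h
      by_contra hne
      exact h (if_neg (fun he => hne (idx_inj hd he)))
    · rintro rfl; simp
  | succ s ih =>
    intro x y
    rw [pow_succ']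
    show (M * M ^ s) _ _ ≠ 0 ↔ ∃ k, Solv p d ω x k ∧ PathProp p d ω s k y
    rw [Matrix.mul_apply]
    constructor
    · intro h
      obtain ⟨k, -, hk⟩ := Finset.exists_ne_zero_of_sum_ne_zero h
      rw [mul_ne_zero_iff] at hk
      refine ⟨((k : ℕ) : ZMod d), ?_, ?_⟩
      · rw [← matrix_entry_iff hd hdvd hf1 hfd hord M hM, idx_surj hd k]
        exact hk.1
      · rw [← ih, idx_surj hd k]
        exact hk.2
    · rintro ⟨k, hsolv, hpath⟩
      intro h0
      rw [Finset.sum_eq_zero_iff] at h0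
      have := h0 (idx hd k) (Finset.mem_univ _)
      rw [mul_eq_zero] at this
      rcases this with h | h
      · exact (matrix_entry_iff hd hdvd hf1 hfd hord M hM x k).mpr hsolv h
      · exact (ih k y).mpr hpath h

end AuxAll

/-- Theorem 2: with `M` the 0-1 matrix recording nonvanishing of the
cyclotomic numbers, `g_d(p) = max_{0 ≤ α ≤ d-1} min{s ≥ 1 : (M^{s-1})_{(α+θ)θ} ≠ 0}`. -/
theorem gWaring_eq_matrix (p d f : ℕ) (hp : p.Prime) (hodd : Odd p)
    (hd : 2 ≤ d) (hdvd : d ∣ p - 1) (hf : f = (p - 1) / d)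
    (ω : (ZMod p)ˣ) (hω : ∀ x : (ZMod p)ˣ, ∃ n : ℕ, ω ^ n = x)
    (M : Matrix (Fin d) (Fin d) ℕ)
    (hM : ∀ i j : Fin d, M i j = if cycNum p d f ω (i : ℕ) (j : ℕ) = 0 then 0 else 1) :
    gWaring p d
      = Finset.sup (Finset.range d) (fun α =>
          sInf {s | 1 ≤ s ∧
            (M ^ (s - 1)) ⟨(α + theta d f) % d, Nat.mod_lt _ (by omega)⟩
              ⟨theta d f % d, Nat.mod_lt _ (by omega)⟩ ≠ 0}) := by
  haveI : Fact p.Prime := ⟨hp⟩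
  haveI : NeZero d := ⟨by omega⟩
  have hord : orderOf ω = p - 1 := ord_of_gen hp hω
  have hp2 : 2 ≤ p := hp.two_le
  have hfd : d * f = p - 1 := by rw [hf]; exact Nat.mul_div_cancel' hdvd
  have hf1 : 1 ≤ f := by
    have hdp : d ≤ p - 1 := Nat.le_of_dvd (by omega) hdvd
    rw [hf]
    exact (Nat.one_le_div_iff (by omega)).mpr hdp
  set t : ZMod d := ((theta d f : ℕ) : ZMod d) with htdef
  have ht : InC p d ω t (-1) := by
    obtain ⟨m, hm⟩ := theta_decomp hodd hfd
    exact ⟨(p - 1) / 2, (pow_half_eq_neg_one hp hodd hord).symm,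
      by rw [hm]; push_cast; simp [htdef]⟩
  -- the "min path length" function
  set mf : ZMod d → ℕ := fun γ => sInf {s | 1 ≤ s ∧ PathProp p d ω (s - 1) (γ + t) t} with hmf
  -- key: sWaring = mf on each coset
  have key : ∀ (a : ZMod p) (γ : ZMod d), InC p d ω γ a → sWaring p d a = mf γ := by
    intro a γ hγ
    have hane : a ≠ 0 := inC_ne_zero hp hγ
    set S : Set ℕ := {k | 1 ≤ k ∧ Sof p d k a} with hS
    have hsw : sWaring p d a = sInf S := rfl
    set T : Set ℕ := {s | 1 ≤ s ∧ PathProp p d ω (s - 1) (γ + t) t} with hT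
    have hSne : S.Nonempty := by
      refine ⟨(ZMod.val a), ⟨?_, fun _ => 1, ?_⟩⟩
      · have : ZMod.val a ≠ 0 := by
          rw [Ne, ZMod.val_eq_zero]; exact hane
        omega
      · have h1 : (∑ _i : Fin (ZMod.val a), (((1 : (ZMod p)ˣ) : ZMod p)) ^ d)
            = ((ZMod.val a : ℕ) : ZMod p) := by simp
        rw [h1, ZMod.natCast_rightInverse a]
    have hTS : T ⊆ S := by
      rintro s ⟨hs1, hpath⟩
      refine ⟨hs1, ?_⟩
      have := lemB hp hd hdvd hord ht (s - 1) γ a hpath hγ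
      rwa [Nat.sub_add_cancel hs1] at this
    have hST : ∀ k ∈ S, ∃ s ∈ T, s ≤ k := by
      rintro k ⟨hk1, hsof⟩
      obtain ⟨s, hsk, hpath⟩ := lemF hp hd hdvd hord hω ht k γ a hγ hsof
      exact ⟨s + 1, ⟨by omega, by simpa using hpath⟩, by omega⟩
    rw [hsw]
    obtain ⟨s0, hs0T, hs0le⟩ := hST _ (Nat.sInf_mem hSne)
    apply le_antisymm
    · exact Nat.sInf_le (hTS (Nat.sInf_mem ⟨s0, hs0T⟩))
    · exact le_trans (Nat.sInf_le hs0T) hs0le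
  -- identify the matrix sInf-sets with the path sInf-sets
  have setEq : ∀ α : ℕ,
      {s | 1 ≤ s ∧
        (M ^ (s - 1)) ⟨(α + theta d f) % d, Nat.mod_lt _ (by omega)⟩
          ⟨theta d f % d, Nat.mod_lt _ (by omega)⟩ ≠ 0}
      = {s | 1 ≤ s ∧ PathProp p d ω (s - 1) (((α : ZMod d)) + t) t} := by
    intro α
    have hidx1 : (⟨(α + theta d f) % d, Nat.mod_lt _ (by omega : 0 < d)⟩ : Fin d)
        = idx hd (((α : ZMod d)) + t) := by
      apply Fin.ext
      show (α + theta d f) % d = ZMod.val (((α : ZMod d)) + t)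
      rw [htdef, ← Nat.cast_add, ZMod.val_natCast]
    have hidx2 : (⟨theta d f % d, Nat.mod_lt _ (by omega : 0 < d)⟩ : Fin d) = idx hd t := by
      apply Fin.ext
      show theta d f % d = ZMod.val t
      rw [htdef, ZMod.val_natCast]
    ext s
    simp only [Set.mem_setOf_eq]
    constructor
    · rintro ⟨hs1, hne⟩
      refine ⟨hs1, ?_⟩
      rw [← pathProp_iff_matrix hd hdvd hf1 hfd hord M hM]
      rwa [hidx1, hidx2] at hne
    · rintro ⟨hs1, hpath⟩
      refine ⟨hs1, ?_⟩
      rw [hidx1, hidx2]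
      rw [pathProp_iff_matrix hd hdvd hf1 hfd hord M hM]
      exact hpath
  have hFm : ∀ α : ℕ,
      sInf {s | 1 ≤ s ∧
        (M ^ (s - 1)) ⟨(α + theta d f) % d, Nat.mod_lt _ (by omega)⟩
          ⟨theta d f % d, Nat.mod_lt _ (by omega)⟩ ≠ 0} = mf ((α : ZMod d)) := by
    intro α
    rw [setEq α]
  unfold gWaring
  apply le_antisymm
  · apply csSup_le
    · exact ⟨sWaring p d ((1 : (ZMod p)ˣ) : ZMod p), 1, rfl⟩
    · rintro b ⟨a, rfl⟩
      obtain ⟨n, hn⟩ := hω a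
      have hInC : InC p d ω ((n : ZMod d)) (a : ZMod p) :=
        ⟨n, by rw [← hn]; simp, rfl⟩
      rw [key _ _ hInC]
      have hv : mf ((n : ZMod d)) = mf (((((n : ZMod d)).val : ℕ) : ZMod d)) := by
        rw [ZMod.natCast_rightInverse]
      rw [hv, ← hFm (((n : ZMod d)).val)]
      apply Finset.le_sup (f := fun α : ℕ =>
        sInf {s | 1 ≤ s ∧
          (M ^ (s - 1)) ⟨(α + theta d f) % d, Nat.mod_lt _ (by omega)⟩
            ⟨theta d f % d, Nat.mod_lt _ (by omega)⟩ ≠ 0})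
      exact Finset.mem_range.mpr (ZMod.val_lt ((n : ZMod d)))
  · apply Finset.sup_le
    intro α hα
    rw [hFm α]
    have hInC : InC p d ω ((α : ZMod d)) (((ω ^ α : (ZMod p)ˣ)) : ZMod p) :=
      ⟨α, by simp, rfl⟩
    rw [← key _ _ hInC]
    apply le_csSup
    · have hfin : ({s | ∃ a : (ZMod p)ˣ, s = sWaring p d (a : ZMod p)} : Set ℕ).Finite :=
        Set.Finite.subset (Set.finite_range fun a : (ZMod p)ˣ => sWaring p d (a : ZMod p))
          (by rintro s ⟨a, rfl⟩; exact ⟨a, rfl⟩)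
      exact hfin.bddAbove
    · exact ⟨ω ^ α, rfl⟩
end
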